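/- arXiv:1911.08282 — 4 statements merged into one kernel-verified Lean document; each statement's English description precedes it below -/
import Mathlib

section
/- Let M be a left 𝕆-module and let m ∈ 𝒜(M) be an associative element. Then for all p, q, r ∈ 𝕆, the left associator satisfies [p,q,rm] = [p,q,r]m, where [p,q,r] is the octonion associator. -/
noncomputable section

open scoped Quaternion

/-- The octonions, realized as pairs of quaternions via the Cayley–Dickson construction. -/
def Octo : Type := ℍ[ℝ] × ℍ[ℝ]

namespace Octo

instance : AddCommGroup Octo := inferInstanceAs (AddCommGroup (ℍ[ℝ] × ℍ[ℝ]))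
instance : Module ℝ Octo := inferInstanceAs (Module ℝ (ℍ[ℝ] × ℍ[ℝ]))

/-- Build an octonion from a pair of quaternions. -/
def mk (a b : ℍ[ℝ]) : Octo := (a, b)

/-- First quaternion component. -/
def p1 (x : Octo) : ℍ[ℝ] := (show ℍ[ℝ] × ℍ[ℝ] from x).1

/-- Second quaternion component. -/
def p2 (x : Octo) : ℍ[ℝ] := (show ℍ[ℝ] × ℍ[ℝ] from x).2

/-- Cayley–Dickson multiplication: `(a,b)(c,d) = (ac − d̄b, da + bc̄)`. -/
instance : Mul Octo :=
  ⟨fun x y => mk (p1 x * p1 y - star (p2 y) * p2 x) (p2 y * p1 x + p2 x * star (p1 y))⟩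

instance : One Octo := ⟨mk 1 0⟩

/-- Octonion conjugation: for `x = (a,b)`, `x̄ = (ā, −b)`. -/
def conj (x : Octo) : Octo := mk (star (p1 x)) (-(p2 x))

/-- The octonion associator `[x,y,z] = (xy)z − x(yz)`. -/
def assoc (x y z : Octo) : Octo := x * y * z - x * (y * z)

/-- The octonion commutator `[x,y] = xy − yx`. -/
def comm (x y : Octo) : Octo := x * y - y * x

/-- The canonical embedding of the reals into the octonions. -/
def ofReal (r : ℝ) : Octo := r • (1 : Octo)

end Octo

section OMod

variable {M : Type*} [AddCommGroup M] [Module ℝ M]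
variable {N : Type*} [AddCommGroup N] [Module ℝ N]

/-- `IsOMod sm` says that the scalar multiplication `sm : 𝕆 × M → M` makes the real vector
space `M` a left 𝕆-module: `sm` is ℝ-bilinear, unital, and the left associator is
alternating in its two octonion arguments. -/
structure IsOMod (sm : Octo → M → M) : Prop where
  smul_add : ∀ (p : Octo) (m n : M), sm p (m + n) = sm p m + sm p n
  add_smul : ∀ (p q : Octo) (m : M), sm (p + q) m = sm p m + sm q m
  real_smul : ∀ (r : ℝ) (p : Octo) (m : M), sm (r • p) m = r • sm p m
  smul_real : ∀ (r : ℝ) (p : Octo) (m : M), sm p (r • m) = r • sm p m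
  one_smul : ∀ m : M, sm 1 m = m
  alt : ∀ (p q : Octo) (m : M),
    sm (p * q) m - sm p (sm q m) = -(sm (q * p) m - sm q (sm p m))

/-- The left associator `[p,q,m] = (pq)m − p(qm)`. -/
def oLassoc (sm : Octo → M → M) (p q : Octo) (m : M) : M :=
  sm (p * q) m - sm p (sm q m)

/-- The set `𝒜(M)` of associative elements: `[p,q,m] = 0` for all `p,q ∈ 𝕆`. -/
def assocSet (sm : Octo → M → M) : Set M :=
  {m | ∀ p q : Octo, oLassoc sm p q m = 0}

/-- The set `𝒜⁻(M)` of conjugate associative elements: `(pq)m = q(pm)` for all `p,q ∈ 𝕆`. -/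
def conjAssocSet (sm : Octo → M → M) : Set M :=
  {m | ∀ p q : Octo, sm (p * q) m = sm q (sm p m)}

/-- A homomorphism of left 𝕆-modules: an ℝ-linear map commuting with 𝕆-scalar
multiplication. -/
def IsOHom (sm : Octo → M → M) (sm' : Octo → N → N) (f : M → N) : Prop :=
  IsLinearMap ℝ f ∧ ∀ (p : Octo) (m : M), f (sm p m) = sm' p (f m)

/-- Two left 𝕆-modules are isomorphic if there is a bijective homomorphism between them. -/
def OIso (sm : Octo → M → M) (sm' : Octo → N → N) : Prop :=
  ∃ f : M → N, IsOHom sm sm' f ∧ Function.Bijective f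

/-- A submodule: a real subspace closed under 𝕆-scalar multiplication. -/
structure IsOSubmodule (sm : Octo → M → M) (S : Set M) : Prop where
  zero_mem : (0 : M) ∈ S
  add_mem : ∀ {x y : M}, x ∈ S → y ∈ S → x + y ∈ S
  smul_mem : ∀ (r : ℝ) {x : M}, x ∈ S → r • x ∈ S
  osmul_mem : ∀ (p : Octo) {x : M}, x ∈ S → sm p x ∈ S

/-- `⟨m⟩_𝕆`, the smallest submodule containing `m`, as a set. -/
def genSet (sm : Octo → M → M) (m : M) : Set M :=
  ⋂₀ {S : Set M | IsOSubmodule sm S ∧ m ∈ S}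

/-- An element `m` is cyclic if `⟨m⟩_𝕆 = 𝕆m`. -/
def IsOCyclic (sm : Octo → M → M) (m : M) : Prop :=
  genSet sm m = {x | ∃ p : Octo, x = sm p m}

/-- 𝕆-linear independence of a subset `S ⊆ M`: any finite 𝕆-linear combination of
distinct elements of `S` that vanishes has all coefficients zero. -/
def OLinIndep (sm : Octo → M → M) (S : Set M) : Prop :=
  ∀ (n : ℕ) (s : Fin n → M) (r : Fin n → Octo), Function.Injective s → (∀ i, s i ∈ S) →
    (∑ i, sm (r i) (s i)) = 0 → ∀ i, r i = 0

end OMod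

/-- The canonical left 𝕆-module structure on 𝕆 itself. -/
def oSmul : Octo → Octo → Octo := fun p x => p * x

/-- The left 𝕆-module structure `𝕆̄` on 𝕆: `p ·̂ x = p̄x`. -/
def oBarSmul : Octo → Octo → Octo := fun p x => Octo.conj p * x

/-- For an associative element `m`, `[p,q,rm] = [p,q,r]m` for all `p,q,r ∈ 𝕆`. -/
theorem stmt4 {M : Type*} [AddCommGroup M] [Module ℝ M]
    (sm : Octo → M → M) (h : IsOMod sm) (m : M) (hm : m ∈ assocSet sm) (p q r : Octo) :
    oLassoc sm p q (sm r m) = sm (Octo.assoc p q r) m := by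
  have key : ∀ a b : Octo, sm (a * b) m = sm a (sm b m) := by
    intro a b
    have := hm a b
    simpa [oLassoc, sub_eq_zero] using this
  have hsub : ∀ a b : Octo, sm (a - b) m = sm a m - sm b m := by
    intro a b
    have h1 : sm (a - b + b) m = sm (a - b) m + sm b m := h.add_smul _ _ m
    rw [sub_add_cancel] at h1
    rw [eq_sub_iff_add_eq, ← h1]
  simp only [oLassoc, Octo.assoc, hsub, key]
end
end

section
/- For the left 𝕆-module 𝕆̄ (the octonions with scalar multiplication p ·̂ x := p̄x), the set of conjugate associative elements is exactly the real multiples of 1: 𝒜⁻(𝕆̄) = ℝ. -/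
noncomputable section

open scoped Quaternion

namespace Octo

lemma mul_def (x y : Octo) :
    x * y = mk (p1 x * p1 y - star (p2 y) * p2 x) (p2 y * p1 x + p2 x * star (p1 y)) := rfl

lemma conj_def (x : Octo) : conj x = mk (star (p1 x)) (-(p2 x)) := rfl

@[simp] lemma p1_mk (a b : ℍ[ℝ]) : p1 (mk a b) = a := rfl

@[simp] lemma p2_mk (a b : ℍ[ℝ]) : p2 (mk a b) = b := rfl

lemma mk_inj (a b c d : ℍ[ℝ]) : mk a b = mk c d ↔ a = c ∧ b = d := Prod.ext_iff

lemma one_def : (1 : Octo) = mk 1 0 := rfl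

lemma p1_smul (r : ℝ) (x : Octo) : p1 (r • x) = r • p1 x := rfl

lemma p2_smul (r : ℝ) (x : Octo) : p2 (r • x) = r • p2 x := rfl

lemma ext' (x y : Octo) (h1 : p1 x = p1 y) (h2 : p2 x = p2 y) : x = y := Prod.ext h1 h2

lemma mul_one' (x : Octo) : x * 1 = x := by
  refine ext' _ _ ?_ ?_ <;> simp [mul_def, one_def]

lemma mul_smul' (r : ℝ) (x y : Octo) : x * (r • y) = r • (x * y) := by
  refine ext' _ _ ?_ ?_ <;>
    simp [mul_def, p1_smul, p2_smul, smul_sub, smul_add, mul_smul_comm, smul_mul_assoc]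

lemma conj_mul' (x y : Octo) : conj (x * y) = conj y * conj x := by
  refine ext' _ _ ?_ ?_ <;>
    simp [mul_def, conj_def, StarMul.star_mul, mul_comm, neg_add]

end Octo

/-- The basis octonion `i`. -/
def auxI : Octo := Octo.mk ⟨0,1,0,0⟩ 0

/-- The basis octonion `j`. -/
def auxJ : Octo := Octo.mk ⟨0,0,1,0⟩ 0

/-- The basis octonion `ℓ`. -/
def auxL : Octo := Octo.mk 0 1

/-- The quaternion `i`. -/
def qI : ℍ[ℝ] := ⟨0,1,0,0⟩

/-- The quaternion `j`. -/
def qJ : ℍ[ℝ] := ⟨0,0,1,0⟩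

@[simp] lemma qI_re : qI.re = 0 := rfl
@[simp] lemma qI_imI : qI.imI = 1 := rfl
@[simp] lemma qI_imJ : qI.imJ = 0 := rfl
@[simp] lemma qI_imK : qI.imK = 0 := rfl
@[simp] lemma qJ_re : qJ.re = 0 := rfl
@[simp] lemma qJ_imI : qJ.imI = 0 := rfl
@[simp] lemma qJ_imJ : qJ.imJ = 1 := rfl
@[simp] lemma qJ_imK : qJ.imK = 0 := rfl

lemma p1_auxI : Octo.p1 auxI = qI := rfl
lemma p2_auxI : Octo.p2 auxI = 0 := rfl
lemma p1_auxJ : Octo.p1 auxJ = qJ := rfl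
lemma p2_auxJ : Octo.p2 auxJ = 0 := rfl
lemma p1_auxL : Octo.p1 auxL = 0 := rfl
lemma p2_auxL : Octo.p2 auxL = 1 := rfl

set_option maxHeartbeats 1000000 in
/-- `𝒜⁻(𝕆̄) = ℝ`, the real multiples of `1`. -/
theorem stmt7 : conjAssocSet oBarSmul = Set.range Octo.ofReal := by
  ext x
  simp only [Set.mem_range, conjAssocSet, Set.mem_setOf_eq]
  constructor
  · intro h
    refine ⟨(Octo.p1 x).re, ?_⟩
    have h1 := h auxI auxJ
    have h2 := h auxI auxL
    have h3 := h auxJ auxL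
    simp only [oBarSmul, p1_auxI, p2_auxI, p1_auxJ, p2_auxJ, p1_auxL, p2_auxL, Octo.mul_def, Octo.conj_def, Octo.p1_mk, Octo.p2_mk,
      Octo.mk_inj] at h1 h2 h3
    simp [Quaternion.ext_iff, Quaternion.re_mul, Quaternion.imI_mul,
      Quaternion.imJ_mul, Quaternion.imK_mul] at h1 h2 h3
    obtain ⟨k1, j1, i1, r1⟩ := h1
    obtain ⟨⟨-, -⟩, k2, j2⟩ := h2
    obtain ⟨⟨-, -⟩, -, i3⟩ := h3
    refine Octo.ext' _ _ ?_ ?_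
    · show ((Octo.p1 x).re • (1 : ℍ[ℝ])) = Octo.p1 x
      ext <;> simp <;> linarith
    · show ((Octo.p1 x).re • (0 : ℍ[ℝ])) = Octo.p2 x
      ext <;> simp <;> linarith
  · rintro ⟨r, rfl⟩
    intro p q
    simp only [oBarSmul, Octo.ofReal, Octo.mul_smul', Octo.mul_one', Octo.conj_mul']
end
end

section
/- For any left 𝕆-module M, the set of associative elements and the set of conjugate associative elements intersect trivially: 𝒜(M) ∩ 𝒜⁻(M) = {0}. -/
noncomputable section

open scoped Quaternion

lemma IsOMod.smul_zero' {M : Type*} [AddCommGroup M] [Module ℝ M]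
    {sm : Octo → M → M} (h : IsOMod sm) (p : Octo) : sm p 0 = 0 := by
  have := h.smul_add p 0 0
  simp only [add_zero] at this
  exact left_eq_add.mp this

lemma IsOMod.zero_smul' {M : Type*} [AddCommGroup M] [Module ℝ M]
    {sm : Octo → M → M} (h : IsOMod sm) (m : M) : sm 0 m = 0 := by
  have := h.add_smul 0 0 m
  simp only [add_zero] at this
  exact left_eq_add.mp this

lemma IsOMod.neg_smul' {M : Type*} [AddCommGroup M] [Module ℝ M]
    {sm : Octo → M → M} (h : IsOMod sm) (p : Octo) (m : M) : sm (-p) m = -sm p m := by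
  have := h.real_smul (-1) p m
  simpa using this

lemma IsOMod.sub_smul' {M : Type*} [AddCommGroup M] [Module ℝ M]
    {sm : Octo → M → M} (h : IsOMod sm) (p q : Octo) (m : M) :
    sm (p - q) m = sm p m - sm q m := by
  rw [sub_eq_add_neg, h.add_smul, h.neg_smul', sub_eq_add_neg]

lemma Octo.mk_mul_mk (a b c d : ℍ[ℝ]) :
    Octo.mk a b * Octo.mk c d = Octo.mk (a * c - star d * b) (d * a + b * star c) := rfl

lemma Octo.mk_sub_mk (a b c d : ℍ[ℝ]) :
    Octo.mk a b - Octo.mk c d = Octo.mk (a - c) (b - d) := rfl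

lemma Octo.one_def_s8 : (1 : Octo) = Octo.mk 1 0 := rfl

lemma Octo.mk_injEq (a b c d : ℍ[ℝ]) : Octo.mk a b = Octo.mk c d ↔ a = c ∧ b = d :=
  iff_of_eq (Prod.mk.injEq a b c d)

lemma octo_key :
    (Octo.mk ⟨0,0,0,-(1/2)⟩ 0) *
      ((Octo.mk ⟨0,1,0,0⟩ 0) * (Octo.mk ⟨0,0,1,0⟩ 0)
        - (Octo.mk ⟨0,0,1,0⟩ 0) * (Octo.mk ⟨0,1,0,0⟩ 0)) = 1 := by
  change (Octo.mk (id (α := ℍ[ℝ]) ⟨0,0,0,-(1/2)⟩) 0) *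
      ((Octo.mk (id (α := ℍ[ℝ]) ⟨0,1,0,0⟩) 0) * (Octo.mk (id (α := ℍ[ℝ]) ⟨0,0,1,0⟩) 0)
        - (Octo.mk (id (α := ℍ[ℝ]) ⟨0,0,1,0⟩) 0) * (Octo.mk (id (α := ℍ[ℝ]) ⟨0,1,0,0⟩) 0)) = 1
  rw [Octo.mk_mul_mk, Octo.mk_mul_mk, Octo.mk_sub_mk, Octo.mk_mul_mk, Octo.one_def_s8,
    Octo.mk_injEq]
  constructor <;>
    · ext <;> simp [Quaternion.ext_iff] <;> simp only [id] <;> norm_num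
/-- `𝒜(M) ∩ 𝒜⁻(M) = {0}`. -/
theorem stmt8 {M : Type*} [AddCommGroup M] [Module ℝ M]
    (sm : Octo → M → M) (h : IsOMod sm) :
    assocSet sm ∩ conjAssocSet sm = {0} := by
  have hz : ∀ p : Octo, sm p 0 = 0 := h.smul_zero'
  ext m
  simp only [Set.mem_inter_iff, Set.mem_singleton_iff]
  constructor
  · rintro ⟨ha, hc⟩
    have ha' : ∀ p q : Octo, sm (p * q) m = sm p (sm q m) := by
      intro p q
      have := ha p q
      unfold oLassoc at this
      exact sub_eq_zero.mp this
    set i : Octo := Octo.mk ⟨0,1,0,0⟩ 0 with hi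
    set j : Octo := Octo.mk ⟨0,0,1,0⟩ 0 with hj
    set c' : Octo := Octo.mk ⟨0,0,0,-(1/2)⟩ 0 with hc'
    have hcomm : sm (i * j - j * i) m = 0 := by
      rw [h.sub_smul']
      have h1 : sm (j * i) m = sm j (sm i m) := ha' j i
      have h2 : sm (i * j) m = sm j (sm i m) := hc i j
      rw [h1, h2, sub_self]
    have : m = sm (c' * (i * j - j * i)) m := by
      rw [octo_key, h.one_smul]
    rw [ha', hcomm, hz] at this
    exact this
  · rintro rfl
    refine ⟨fun p q => ?_, fun p q => ?_⟩
    · unfold oLassoc; rw [hz, hz, hz, sub_zero]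
    · rw [hz, hz, hz]
end
end

section
/- Let M be a left 𝕆-module and let x₁, …, xₙ ∈ 𝒜(M) be associative elements that are ℝ-linearly independent. If r₁, …, rₙ ∈ 𝕆 satisfy Σᵢ rᵢxᵢ = 0, then rᵢ = 0 for every i. Consequently, a subset S ⊆ 𝒜(M) is 𝕆-linearly independent if and only if it is ℝ-linearly independent. -/
noncomputable section

open scoped Quaternion

namespace StmtNine

def qmk (a b c d : ℝ) : ℍ[ℝ] := ⟨a, b, c, d⟩
@[simp] lemma qmk_re (a b c d : ℝ) : (qmk a b c d).re = a := rfl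
@[simp] lemma qmk_imI (a b c d : ℝ) : (qmk a b c d).imI = b := rfl
@[simp] lemma qmk_imJ (a b c d : ℝ) : (qmk a b c d).imJ = c := rfl
@[simp] lemma qmk_imK (a b c d : ℝ) : (qmk a b c d).imK = d := rfl

def E1 : Octo := Octo.mk (qmk 0 1 0 0) 0
def E2 : Octo := Octo.mk (qmk 0 0 1 0) 0
def E3 : Octo := Octo.mk (qmk 0 0 0 1) 0
def E4 : Octo := Octo.mk 0 (qmk 1 0 0 0)
def E5 : Octo := Octo.mk 0 (qmk 0 1 0 0)
def E6 : Octo := Octo.mk 0 (qmk 0 0 1 0)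
def E7 : Octo := Octo.mk 0 (qmk 0 0 0 1)

lemma oneOcto : (1 : Octo) = Octo.mk 1 0 := rfl
lemma p1_mk (a b : ℍ[ℝ]) : (Octo.mk a b).p1 = a := rfl
lemma p2_mk (a b : ℍ[ℝ]) : (Octo.mk a b).p2 = b := rfl
lemma p1_zero : (0 : Octo).p1 = 0 := rfl
lemma p2_zero : (0 : Octo).p2 = 0 := rfl
lemma p1_add (x y : Octo) : (x + y).p1 = x.p1 + y.p1 := rfl
lemma p2_add (x y : Octo) : (x + y).p2 = x.p2 + y.p2 := rfl
lemma p1_neg (x : Octo) : (-x).p1 = -(x.p1) := rfl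
lemma p2_neg (x : Octo) : (-x).p2 = -(x.p2) := rfl
lemma p1_smul (r : ℝ) (x : Octo) : (r • x).p1 = r • x.p1 := rfl
lemma p2_smul (r : ℝ) (x : Octo) : (r • x).p2 = r • x.p2 := rfl
lemma p1_mul (x y : Octo) : (x * y).p1 = x.p1 * y.p1 - star (y.p2) * x.p2 := rfl
lemma p2_mul (x y : Octo) : (x * y).p2 = y.p2 * x.p1 + x.p2 * star (y.p1) := rfl
lemma octo_ext {x y : Octo} (h1 : x.p1 = y.p1) (h2 : x.p2 = y.p2) : x = y := Prod.ext h1 h2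

lemma odecomp (q : Octo) : q = q.p1.re • (1:Octo) + q.p1.imI • E1 + q.p1.imJ • E2 + q.p1.imK • E3
    + q.p2.re • E4 + q.p2.imI • E5 + q.p2.imJ • E6 + q.p2.imK • E7 := by
  refine octo_ext ?_ ?_ <;>
    simp only [p1_add, p2_add, p1_smul, p2_smul, oneOcto, p1_mk, p2_mk, E1,E2,E3,E4,E5,E6,E7] <;>
    ext <;> simp

lemma ofReal_eq_zero {a : ℝ} (ha : Octo.ofReal a = 0) : a = 0 := by
  have h2 := congrArg (fun q : Octo => q.p1.re) ha
  simpa [Octo.ofReal, p1_smul, oneOcto, p1_mk, p1_zero] using h2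

section
variable {M : Type*} [AddCommGroup M] [Module ℝ M] {sm : Octo → M → M}

lemma sm_zero (h : IsOMod sm) (p : Octo) : sm p (0 : M) = 0 := by
  simpa using h.smul_real 0 p (0 : M)

lemma sm_neg (h : IsOMod sm) (p : Octo) (m : M) : sm p (-m) = -(sm p m) := by
  simpa using h.smul_real (-1) p m

lemma sm_negl (h : IsOMod sm) (p : Octo) (m : M) : sm (-p) m = -(sm p m) := by
  simpa using h.real_smul (-1) p m

lemma sm_assocElem {m : M} (hm : m ∈ assocSet sm) (p q : Octo) :
    sm (p * q) m = sm p (sm q m) := by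
  have h1 := hm p q
  rw [oLassoc] at h1
  exact sub_eq_zero.mp h1

lemma assoc_zero (h : IsOMod sm) : (0 : M) ∈ assocSet sm := by
  intro p q
  simp only [oLassoc, sm_zero h, sub_zero]

lemma assoc_add (h : IsOMod sm) {x y : M} (hx : x ∈ assocSet sm) (hy : y ∈ assocSet sm) :
    x + y ∈ assocSet sm := by
  intro p q
  have h1 := hx p q
  have h2 := hy p q
  simp only [oLassoc] at h1 h2 ⊢
  rw [h.smul_add, h.smul_add, h.smul_add]
  linear_combination (norm := module) h1 + h2

lemma assoc_smul (h : IsOMod sm) (r : ℝ) {x : M} (hx : x ∈ assocSet sm) :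
    r • x ∈ assocSet sm := by
  intro p q
  have h1 := hx p q
  simp only [oLassoc] at h1 ⊢
  rw [h.smul_real, h.smul_real, h.smul_real, ← smul_sub, h1, smul_zero]

lemma assoc_sum (h : IsOMod sm) {n : ℕ} (c : Fin n → ℝ) (x : Fin n → M)
    (hx : ∀ i, x i ∈ assocSet sm) : (∑ i, c i • x i) ∈ assocSet sm := by
  classical
  exact Finset.sum_induction _ (· ∈ assocSet sm) (fun a b ha hb => assoc_add h ha hb)
    (assoc_zero h) (fun i _ => assoc_smul h (c i) (hx i))

def smL (h : IsOMod sm) (p : Octo) : M →ₗ[ℝ] M where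
  toFun := sm p
  map_add' := h.smul_add p
  map_smul' := fun r m => h.smul_real r p m

lemma smL_apply (h : IsOMod sm) (p : Octo) (m : M) : smL h p m = sm p m := rfl

lemma sm_expand (h : IsOMod sm) (q : Octo) (x : M) :
    sm q x = q.p1.re • x + q.p1.imI • sm E1 x + q.p1.imJ • sm E2 x + q.p1.imK • sm E3 x
      + q.p2.re • sm E4 x + q.p2.imI • sm E5 x + q.p2.imJ • sm E6 x + q.p2.imK • sm E7 x := by
  conv_lhs => rw [odecomp q]
  rw [h.add_smul, h.add_smul, h.add_smul, h.add_smul, h.add_smul, h.add_smul, h.add_smul]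
  rw [h.real_smul, h.real_smul, h.real_smul, h.real_smul, h.real_smul, h.real_smul,
    h.real_smul, h.real_smul, h.one_smul]

end


lemma mulE_1_1 : E1 * E1 = -(1:Octo) := by
  refine octo_ext ?_ ?_ <;> · ext <;>
    simp [p1_mul,p2_mul,p1_neg,p2_neg,p1_mk,p2_mk,oneOcto,E1,E2,E3,E4,E5,E6,E7]

lemma mulE_1_2 : E1 * E2 = E3 := by
  refine octo_ext ?_ ?_ <;> · ext <;>
    simp [p1_mul,p2_mul,p1_neg,p2_neg,p1_mk,p2_mk,oneOcto,E1,E2,E3,E4,E5,E6,E7]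

lemma mulE_1_3 : E1 * E3 = -E2 := by
  refine octo_ext ?_ ?_ <;> · ext <;>
    simp [p1_mul,p2_mul,p1_neg,p2_neg,p1_mk,p2_mk,oneOcto,E1,E2,E3,E4,E5,E6,E7]

lemma mulE_1_4 : E1 * E4 = E5 := by
  refine octo_ext ?_ ?_ <;> · ext <;>
    simp [p1_mul,p2_mul,p1_neg,p2_neg,p1_mk,p2_mk,oneOcto,E1,E2,E3,E4,E5,E6,E7]

lemma mulE_1_5 : E1 * E5 = -E4 := by
  refine octo_ext ?_ ?_ <;> · ext <;>
    simp [p1_mul,p2_mul,p1_neg,p2_neg,p1_mk,p2_mk,oneOcto,E1,E2,E3,E4,E5,E6,E7]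

lemma mulE_1_6 : E1 * E6 = -E7 := by
  refine octo_ext ?_ ?_ <;> · ext <;>
    simp [p1_mul,p2_mul,p1_neg,p2_neg,p1_mk,p2_mk,oneOcto,E1,E2,E3,E4,E5,E6,E7]

lemma mulE_1_7 : E1 * E7 = E6 := by
  refine octo_ext ?_ ?_ <;> · ext <;>
    simp [p1_mul,p2_mul,p1_neg,p2_neg,p1_mk,p2_mk,oneOcto,E1,E2,E3,E4,E5,E6,E7]

lemma mulE_2_1 : E2 * E1 = -E3 := by
  refine octo_ext ?_ ?_ <;> · ext <;>
    simp [p1_mul,p2_mul,p1_neg,p2_neg,p1_mk,p2_mk,oneOcto,E1,E2,E3,E4,E5,E6,E7]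

lemma mulE_2_2 : E2 * E2 = -(1:Octo) := by
  refine octo_ext ?_ ?_ <;> · ext <;>
    simp [p1_mul,p2_mul,p1_neg,p2_neg,p1_mk,p2_mk,oneOcto,E1,E2,E3,E4,E5,E6,E7]

lemma mulE_2_3 : E2 * E3 = E1 := by
  refine octo_ext ?_ ?_ <;> · ext <;>
    simp [p1_mul,p2_mul,p1_neg,p2_neg,p1_mk,p2_mk,oneOcto,E1,E2,E3,E4,E5,E6,E7]

lemma mulE_2_4 : E2 * E4 = E6 := by
  refine octo_ext ?_ ?_ <;> · ext <;>
    simp [p1_mul,p2_mul,p1_neg,p2_neg,p1_mk,p2_mk,oneOcto,E1,E2,E3,E4,E5,E6,E7]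

lemma mulE_2_5 : E2 * E5 = E7 := by
  refine octo_ext ?_ ?_ <;> · ext <;>
    simp [p1_mul,p2_mul,p1_neg,p2_neg,p1_mk,p2_mk,oneOcto,E1,E2,E3,E4,E5,E6,E7]

lemma mulE_2_6 : E2 * E6 = -E4 := by
  refine octo_ext ?_ ?_ <;> · ext <;>
    simp [p1_mul,p2_mul,p1_neg,p2_neg,p1_mk,p2_mk,oneOcto,E1,E2,E3,E4,E5,E6,E7]

lemma mulE_2_7 : E2 * E7 = -E5 := by
  refine octo_ext ?_ ?_ <;> · ext <;>
    simp [p1_mul,p2_mul,p1_neg,p2_neg,p1_mk,p2_mk,oneOcto,E1,E2,E3,E4,E5,E6,E7]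

lemma mulE_3_1 : E3 * E1 = E2 := by
  refine octo_ext ?_ ?_ <;> · ext <;>
    simp [p1_mul,p2_mul,p1_neg,p2_neg,p1_mk,p2_mk,oneOcto,E1,E2,E3,E4,E5,E6,E7]

lemma mulE_3_2 : E3 * E2 = -E1 := by
  refine octo_ext ?_ ?_ <;> · ext <;>
    simp [p1_mul,p2_mul,p1_neg,p2_neg,p1_mk,p2_mk,oneOcto,E1,E2,E3,E4,E5,E6,E7]

lemma mulE_3_3 : E3 * E3 = -(1:Octo) := by
  refine octo_ext ?_ ?_ <;> · ext <;>
    simp [p1_mul,p2_mul,p1_neg,p2_neg,p1_mk,p2_mk,oneOcto,E1,E2,E3,E4,E5,E6,E7]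

lemma mulE_3_4 : E3 * E4 = E7 := by
  refine octo_ext ?_ ?_ <;> · ext <;>
    simp [p1_mul,p2_mul,p1_neg,p2_neg,p1_mk,p2_mk,oneOcto,E1,E2,E3,E4,E5,E6,E7]

lemma mulE_3_5 : E3 * E5 = -E6 := by
  refine octo_ext ?_ ?_ <;> · ext <;>
    simp [p1_mul,p2_mul,p1_neg,p2_neg,p1_mk,p2_mk,oneOcto,E1,E2,E3,E4,E5,E6,E7]

lemma mulE_3_6 : E3 * E6 = E5 := by
  refine octo_ext ?_ ?_ <;> · ext <;>
    simp [p1_mul,p2_mul,p1_neg,p2_neg,p1_mk,p2_mk,oneOcto,E1,E2,E3,E4,E5,E6,E7]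

lemma mulE_3_7 : E3 * E7 = -E4 := by
  refine octo_ext ?_ ?_ <;> · ext <;>
    simp [p1_mul,p2_mul,p1_neg,p2_neg,p1_mk,p2_mk,oneOcto,E1,E2,E3,E4,E5,E6,E7]

lemma mulE_4_1 : E4 * E1 = -E5 := by
  refine octo_ext ?_ ?_ <;> · ext <;>
    simp [p1_mul,p2_mul,p1_neg,p2_neg,p1_mk,p2_mk,oneOcto,E1,E2,E3,E4,E5,E6,E7]

lemma mulE_4_2 : E4 * E2 = -E6 := by
  refine octo_ext ?_ ?_ <;> · ext <;>
    simp [p1_mul,p2_mul,p1_neg,p2_neg,p1_mk,p2_mk,oneOcto,E1,E2,E3,E4,E5,E6,E7]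

lemma mulE_4_3 : E4 * E3 = -E7 := by
  refine octo_ext ?_ ?_ <;> · ext <;>
    simp [p1_mul,p2_mul,p1_neg,p2_neg,p1_mk,p2_mk,oneOcto,E1,E2,E3,E4,E5,E6,E7]

lemma mulE_4_4 : E4 * E4 = -(1:Octo) := by
  refine octo_ext ?_ ?_ <;> · ext <;>
    simp [p1_mul,p2_mul,p1_neg,p2_neg,p1_mk,p2_mk,oneOcto,E1,E2,E3,E4,E5,E6,E7]

lemma mulE_4_5 : E4 * E5 = E1 := by
  refine octo_ext ?_ ?_ <;> · ext <;>
    simp [p1_mul,p2_mul,p1_neg,p2_neg,p1_mk,p2_mk,oneOcto,E1,E2,E3,E4,E5,E6,E7]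

lemma mulE_4_6 : E4 * E6 = E2 := by
  refine octo_ext ?_ ?_ <;> · ext <;>
    simp [p1_mul,p2_mul,p1_neg,p2_neg,p1_mk,p2_mk,oneOcto,E1,E2,E3,E4,E5,E6,E7]

lemma mulE_4_7 : E4 * E7 = E3 := by
  refine octo_ext ?_ ?_ <;> · ext <;>
    simp [p1_mul,p2_mul,p1_neg,p2_neg,p1_mk,p2_mk,oneOcto,E1,E2,E3,E4,E5,E6,E7]

lemma mulE_5_1 : E5 * E1 = E4 := by
  refine octo_ext ?_ ?_ <;> · ext <;>
    simp [p1_mul,p2_mul,p1_neg,p2_neg,p1_mk,p2_mk,oneOcto,E1,E2,E3,E4,E5,E6,E7]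

lemma mulE_5_2 : E5 * E2 = -E7 := by
  refine octo_ext ?_ ?_ <;> · ext <;>
    simp [p1_mul,p2_mul,p1_neg,p2_neg,p1_mk,p2_mk,oneOcto,E1,E2,E3,E4,E5,E6,E7]

lemma mulE_5_3 : E5 * E3 = E6 := by
  refine octo_ext ?_ ?_ <;> · ext <;>
    simp [p1_mul,p2_mul,p1_neg,p2_neg,p1_mk,p2_mk,oneOcto,E1,E2,E3,E4,E5,E6,E7]

lemma mulE_5_4 : E5 * E4 = -E1 := by
  refine octo_ext ?_ ?_ <;> · ext <;>
    simp [p1_mul,p2_mul,p1_neg,p2_neg,p1_mk,p2_mk,oneOcto,E1,E2,E3,E4,E5,E6,E7]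

lemma mulE_5_5 : E5 * E5 = -(1:Octo) := by
  refine octo_ext ?_ ?_ <;> · ext <;>
    simp [p1_mul,p2_mul,p1_neg,p2_neg,p1_mk,p2_mk,oneOcto,E1,E2,E3,E4,E5,E6,E7]

lemma mulE_5_6 : E5 * E6 = -E3 := by
  refine octo_ext ?_ ?_ <;> · ext <;>
    simp [p1_mul,p2_mul,p1_neg,p2_neg,p1_mk,p2_mk,oneOcto,E1,E2,E3,E4,E5,E6,E7]

lemma mulE_5_7 : E5 * E7 = E2 := by
  refine octo_ext ?_ ?_ <;> · ext <;>
    simp [p1_mul,p2_mul,p1_neg,p2_neg,p1_mk,p2_mk,oneOcto,E1,E2,E3,E4,E5,E6,E7]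

lemma mulE_6_1 : E6 * E1 = E7 := by
  refine octo_ext ?_ ?_ <;> · ext <;>
    simp [p1_mul,p2_mul,p1_neg,p2_neg,p1_mk,p2_mk,oneOcto,E1,E2,E3,E4,E5,E6,E7]

lemma mulE_6_2 : E6 * E2 = E4 := by
  refine octo_ext ?_ ?_ <;> · ext <;>
    simp [p1_mul,p2_mul,p1_neg,p2_neg,p1_mk,p2_mk,oneOcto,E1,E2,E3,E4,E5,E6,E7]

lemma mulE_6_3 : E6 * E3 = -E5 := by
  refine octo_ext ?_ ?_ <;> · ext <;>
    simp [p1_mul,p2_mul,p1_neg,p2_neg,p1_mk,p2_mk,oneOcto,E1,E2,E3,E4,E5,E6,E7]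

lemma mulE_6_4 : E6 * E4 = -E2 := by
  refine octo_ext ?_ ?_ <;> · ext <;>
    simp [p1_mul,p2_mul,p1_neg,p2_neg,p1_mk,p2_mk,oneOcto,E1,E2,E3,E4,E5,E6,E7]

lemma mulE_6_5 : E6 * E5 = E3 := by
  refine octo_ext ?_ ?_ <;> · ext <;>
    simp [p1_mul,p2_mul,p1_neg,p2_neg,p1_mk,p2_mk,oneOcto,E1,E2,E3,E4,E5,E6,E7]

lemma mulE_6_6 : E6 * E6 = -(1:Octo) := by
  refine octo_ext ?_ ?_ <;> · ext <;>
    simp [p1_mul,p2_mul,p1_neg,p2_neg,p1_mk,p2_mk,oneOcto,E1,E2,E3,E4,E5,E6,E7]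

lemma mulE_6_7 : E6 * E7 = -E1 := by
  refine octo_ext ?_ ?_ <;> · ext <;>
    simp [p1_mul,p2_mul,p1_neg,p2_neg,p1_mk,p2_mk,oneOcto,E1,E2,E3,E4,E5,E6,E7]

lemma mulE_7_1 : E7 * E1 = -E6 := by
  refine octo_ext ?_ ?_ <;> · ext <;>
    simp [p1_mul,p2_mul,p1_neg,p2_neg,p1_mk,p2_mk,oneOcto,E1,E2,E3,E4,E5,E6,E7]

lemma mulE_7_2 : E7 * E2 = E5 := by
  refine octo_ext ?_ ?_ <;> · ext <;>
    simp [p1_mul,p2_mul,p1_neg,p2_neg,p1_mk,p2_mk,oneOcto,E1,E2,E3,E4,E5,E6,E7]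

lemma mulE_7_3 : E7 * E3 = E4 := by
  refine octo_ext ?_ ?_ <;> · ext <;>
    simp [p1_mul,p2_mul,p1_neg,p2_neg,p1_mk,p2_mk,oneOcto,E1,E2,E3,E4,E5,E6,E7]

lemma mulE_7_4 : E7 * E4 = -E3 := by
  refine octo_ext ?_ ?_ <;> · ext <;>
    simp [p1_mul,p2_mul,p1_neg,p2_neg,p1_mk,p2_mk,oneOcto,E1,E2,E3,E4,E5,E6,E7]

lemma mulE_7_5 : E7 * E5 = -E2 := by
  refine octo_ext ?_ ?_ <;> · ext <;>
    simp [p1_mul,p2_mul,p1_neg,p2_neg,p1_mk,p2_mk,oneOcto,E1,E2,E3,E4,E5,E6,E7]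

lemma mulE_7_6 : E7 * E6 = E1 := by
  refine octo_ext ?_ ?_ <;> · ext <;>
    simp [p1_mul,p2_mul,p1_neg,p2_neg,p1_mk,p2_mk,oneOcto,E1,E2,E3,E4,E5,E6,E7]

lemma mulE_7_7 : E7 * E7 = -(1:Octo) := by
  refine octo_ext ?_ ?_ <;> · ext <;>
    simp [p1_mul,p2_mul,p1_neg,p2_neg,p1_mk,p2_mk,oneOcto,E1,E2,E3,E4,E5,E6,E7]

lemma hcomp_1_1 {M : Type*} [AddCommGroup M] [Module ℝ M] {sm : Octo → M → M}
    (h : IsOMod sm) {m : M} (hm : m ∈ assocSet sm) :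
    sm E1 (sm E1 m) = -m := by
  rw [← sm_assocElem hm, mulE_1_1, sm_negl h, h.one_smul]

lemma hcomp_1_2 {M : Type*} [AddCommGroup M] [Module ℝ M] {sm : Octo → M → M}
    (h : IsOMod sm) {m : M} (hm : m ∈ assocSet sm) :
    sm E1 (sm E2 m) = sm E3 m := by
  rw [← sm_assocElem hm, mulE_1_2]

lemma hcomp_1_3 {M : Type*} [AddCommGroup M] [Module ℝ M] {sm : Octo → M → M}
    (h : IsOMod sm) {m : M} (hm : m ∈ assocSet sm) :
    sm E1 (sm E3 m) = -(sm E2 m) := by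
  rw [← sm_assocElem hm, mulE_1_3, sm_negl h]

lemma hcomp_1_4 {M : Type*} [AddCommGroup M] [Module ℝ M] {sm : Octo → M → M}
    (h : IsOMod sm) {m : M} (hm : m ∈ assocSet sm) :
    sm E1 (sm E4 m) = sm E5 m := by
  rw [← sm_assocElem hm, mulE_1_4]

lemma hcomp_1_5 {M : Type*} [AddCommGroup M] [Module ℝ M] {sm : Octo → M → M}
    (h : IsOMod sm) {m : M} (hm : m ∈ assocSet sm) :
    sm E1 (sm E5 m) = -(sm E4 m) := by
  rw [← sm_assocElem hm, mulE_1_5, sm_negl h]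

lemma hcomp_1_6 {M : Type*} [AddCommGroup M] [Module ℝ M] {sm : Octo → M → M}
    (h : IsOMod sm) {m : M} (hm : m ∈ assocSet sm) :
    sm E1 (sm E6 m) = -(sm E7 m) := by
  rw [← sm_assocElem hm, mulE_1_6, sm_negl h]

lemma hcomp_1_7 {M : Type*} [AddCommGroup M] [Module ℝ M] {sm : Octo → M → M}
    (h : IsOMod sm) {m : M} (hm : m ∈ assocSet sm) :
    sm E1 (sm E7 m) = sm E6 m := by
  rw [← sm_assocElem hm, mulE_1_7]

lemma hcomp_2_1 {M : Type*} [AddCommGroup M] [Module ℝ M] {sm : Octo → M → M}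
    (h : IsOMod sm) {m : M} (hm : m ∈ assocSet sm) :
    sm E2 (sm E1 m) = -(sm E3 m) := by
  rw [← sm_assocElem hm, mulE_2_1, sm_negl h]

lemma hcomp_2_2 {M : Type*} [AddCommGroup M] [Module ℝ M] {sm : Octo → M → M}
    (h : IsOMod sm) {m : M} (hm : m ∈ assocSet sm) :
    sm E2 (sm E2 m) = -m := by
  rw [← sm_assocElem hm, mulE_2_2, sm_negl h, h.one_smul]

lemma hcomp_2_3 {M : Type*} [AddCommGroup M] [Module ℝ M] {sm : Octo → M → M}
    (h : IsOMod sm) {m : M} (hm : m ∈ assocSet sm) :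
    sm E2 (sm E3 m) = sm E1 m := by
  rw [← sm_assocElem hm, mulE_2_3]

lemma hcomp_2_4 {M : Type*} [AddCommGroup M] [Module ℝ M] {sm : Octo → M → M}
    (h : IsOMod sm) {m : M} (hm : m ∈ assocSet sm) :
    sm E2 (sm E4 m) = sm E6 m := by
  rw [← sm_assocElem hm, mulE_2_4]

lemma hcomp_2_5 {M : Type*} [AddCommGroup M] [Module ℝ M] {sm : Octo → M → M}
    (h : IsOMod sm) {m : M} (hm : m ∈ assocSet sm) :
    sm E2 (sm E5 m) = sm E7 m := by
  rw [← sm_assocElem hm, mulE_2_5]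

lemma hcomp_2_6 {M : Type*} [AddCommGroup M] [Module ℝ M] {sm : Octo → M → M}
    (h : IsOMod sm) {m : M} (hm : m ∈ assocSet sm) :
    sm E2 (sm E6 m) = -(sm E4 m) := by
  rw [← sm_assocElem hm, mulE_2_6, sm_negl h]

lemma hcomp_2_7 {M : Type*} [AddCommGroup M] [Module ℝ M] {sm : Octo → M → M}
    (h : IsOMod sm) {m : M} (hm : m ∈ assocSet sm) :
    sm E2 (sm E7 m) = -(sm E5 m) := by
  rw [← sm_assocElem hm, mulE_2_7, sm_negl h]

lemma hcomp_3_1 {M : Type*} [AddCommGroup M] [Module ℝ M] {sm : Octo → M → M}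
    (h : IsOMod sm) {m : M} (hm : m ∈ assocSet sm) :
    sm E3 (sm E1 m) = sm E2 m := by
  rw [← sm_assocElem hm, mulE_3_1]

lemma hcomp_3_2 {M : Type*} [AddCommGroup M] [Module ℝ M] {sm : Octo → M → M}
    (h : IsOMod sm) {m : M} (hm : m ∈ assocSet sm) :
    sm E3 (sm E2 m) = -(sm E1 m) := by
  rw [← sm_assocElem hm, mulE_3_2, sm_negl h]

lemma hcomp_3_3 {M : Type*} [AddCommGroup M] [Module ℝ M] {sm : Octo → M → M}
    (h : IsOMod sm) {m : M} (hm : m ∈ assocSet sm) :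
    sm E3 (sm E3 m) = -m := by
  rw [← sm_assocElem hm, mulE_3_3, sm_negl h, h.one_smul]

lemma hcomp_3_4 {M : Type*} [AddCommGroup M] [Module ℝ M] {sm : Octo → M → M}
    (h : IsOMod sm) {m : M} (hm : m ∈ assocSet sm) :
    sm E3 (sm E4 m) = sm E7 m := by
  rw [← sm_assocElem hm, mulE_3_4]

lemma hcomp_3_5 {M : Type*} [AddCommGroup M] [Module ℝ M] {sm : Octo → M → M}
    (h : IsOMod sm) {m : M} (hm : m ∈ assocSet sm) :
    sm E3 (sm E5 m) = -(sm E6 m) := by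
  rw [← sm_assocElem hm, mulE_3_5, sm_negl h]

lemma hcomp_3_6 {M : Type*} [AddCommGroup M] [Module ℝ M] {sm : Octo → M → M}
    (h : IsOMod sm) {m : M} (hm : m ∈ assocSet sm) :
    sm E3 (sm E6 m) = sm E5 m := by
  rw [← sm_assocElem hm, mulE_3_6]

lemma hcomp_3_7 {M : Type*} [AddCommGroup M] [Module ℝ M] {sm : Octo → M → M}
    (h : IsOMod sm) {m : M} (hm : m ∈ assocSet sm) :
    sm E3 (sm E7 m) = -(sm E4 m) := by
  rw [← sm_assocElem hm, mulE_3_7, sm_negl h]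

lemma hcomp_4_1 {M : Type*} [AddCommGroup M] [Module ℝ M] {sm : Octo → M → M}
    (h : IsOMod sm) {m : M} (hm : m ∈ assocSet sm) :
    sm E4 (sm E1 m) = -(sm E5 m) := by
  rw [← sm_assocElem hm, mulE_4_1, sm_negl h]

lemma hcomp_4_2 {M : Type*} [AddCommGroup M] [Module ℝ M] {sm : Octo → M → M}
    (h : IsOMod sm) {m : M} (hm : m ∈ assocSet sm) :
    sm E4 (sm E2 m) = -(sm E6 m) := by
  rw [← sm_assocElem hm, mulE_4_2, sm_negl h]

lemma hcomp_4_3 {M : Type*} [AddCommGroup M] [Module ℝ M] {sm : Octo → M → M}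
    (h : IsOMod sm) {m : M} (hm : m ∈ assocSet sm) :
    sm E4 (sm E3 m) = -(sm E7 m) := by
  rw [← sm_assocElem hm, mulE_4_3, sm_negl h]

lemma hcomp_4_4 {M : Type*} [AddCommGroup M] [Module ℝ M] {sm : Octo → M → M}
    (h : IsOMod sm) {m : M} (hm : m ∈ assocSet sm) :
    sm E4 (sm E4 m) = -m := by
  rw [← sm_assocElem hm, mulE_4_4, sm_negl h, h.one_smul]

lemma hcomp_4_5 {M : Type*} [AddCommGroup M] [Module ℝ M] {sm : Octo → M → M}
    (h : IsOMod sm) {m : M} (hm : m ∈ assocSet sm) :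
    sm E4 (sm E5 m) = sm E1 m := by
  rw [← sm_assocElem hm, mulE_4_5]

lemma hcomp_4_6 {M : Type*} [AddCommGroup M] [Module ℝ M] {sm : Octo → M → M}
    (h : IsOMod sm) {m : M} (hm : m ∈ assocSet sm) :
    sm E4 (sm E6 m) = sm E2 m := by
  rw [← sm_assocElem hm, mulE_4_6]

lemma hcomp_4_7 {M : Type*} [AddCommGroup M] [Module ℝ M] {sm : Octo → M → M}
    (h : IsOMod sm) {m : M} (hm : m ∈ assocSet sm) :
    sm E4 (sm E7 m) = sm E3 m := by
  rw [← sm_assocElem hm, mulE_4_7]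

lemma hcomp_5_1 {M : Type*} [AddCommGroup M] [Module ℝ M] {sm : Octo → M → M}
    (h : IsOMod sm) {m : M} (hm : m ∈ assocSet sm) :
    sm E5 (sm E1 m) = sm E4 m := by
  rw [← sm_assocElem hm, mulE_5_1]

lemma hcomp_5_2 {M : Type*} [AddCommGroup M] [Module ℝ M] {sm : Octo → M → M}
    (h : IsOMod sm) {m : M} (hm : m ∈ assocSet sm) :
    sm E5 (sm E2 m) = -(sm E7 m) := by
  rw [← sm_assocElem hm, mulE_5_2, sm_negl h]

lemma hcomp_5_3 {M : Type*} [AddCommGroup M] [Module ℝ M] {sm : Octo → M → M}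
    (h : IsOMod sm) {m : M} (hm : m ∈ assocSet sm) :
    sm E5 (sm E3 m) = sm E6 m := by
  rw [← sm_assocElem hm, mulE_5_3]

lemma hcomp_5_4 {M : Type*} [AddCommGroup M] [Module ℝ M] {sm : Octo → M → M}
    (h : IsOMod sm) {m : M} (hm : m ∈ assocSet sm) :
    sm E5 (sm E4 m) = -(sm E1 m) := by
  rw [← sm_assocElem hm, mulE_5_4, sm_negl h]

lemma hcomp_5_5 {M : Type*} [AddCommGroup M] [Module ℝ M] {sm : Octo → M → M}
    (h : IsOMod sm) {m : M} (hm : m ∈ assocSet sm) :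
    sm E5 (sm E5 m) = -m := by
  rw [← sm_assocElem hm, mulE_5_5, sm_negl h, h.one_smul]

lemma hcomp_5_6 {M : Type*} [AddCommGroup M] [Module ℝ M] {sm : Octo → M → M}
    (h : IsOMod sm) {m : M} (hm : m ∈ assocSet sm) :
    sm E5 (sm E6 m) = -(sm E3 m) := by
  rw [← sm_assocElem hm, mulE_5_6, sm_negl h]

lemma hcomp_5_7 {M : Type*} [AddCommGroup M] [Module ℝ M] {sm : Octo → M → M}
    (h : IsOMod sm) {m : M} (hm : m ∈ assocSet sm) :
    sm E5 (sm E7 m) = sm E2 m := by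
  rw [← sm_assocElem hm, mulE_5_7]

lemma hcomp_6_1 {M : Type*} [AddCommGroup M] [Module ℝ M] {sm : Octo → M → M}
    (h : IsOMod sm) {m : M} (hm : m ∈ assocSet sm) :
    sm E6 (sm E1 m) = sm E7 m := by
  rw [← sm_assocElem hm, mulE_6_1]

lemma hcomp_6_2 {M : Type*} [AddCommGroup M] [Module ℝ M] {sm : Octo → M → M}
    (h : IsOMod sm) {m : M} (hm : m ∈ assocSet sm) :
    sm E6 (sm E2 m) = sm E4 m := by
  rw [← sm_assocElem hm, mulE_6_2]

lemma hcomp_6_3 {M : Type*} [AddCommGroup M] [Module ℝ M] {sm : Octo → M → M}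
    (h : IsOMod sm) {m : M} (hm : m ∈ assocSet sm) :
    sm E6 (sm E3 m) = -(sm E5 m) := by
  rw [← sm_assocElem hm, mulE_6_3, sm_negl h]

lemma hcomp_6_4 {M : Type*} [AddCommGroup M] [Module ℝ M] {sm : Octo → M → M}
    (h : IsOMod sm) {m : M} (hm : m ∈ assocSet sm) :
    sm E6 (sm E4 m) = -(sm E2 m) := by
  rw [← sm_assocElem hm, mulE_6_4, sm_negl h]

lemma hcomp_6_5 {M : Type*} [AddCommGroup M] [Module ℝ M] {sm : Octo → M → M}
    (h : IsOMod sm) {m : M} (hm : m ∈ assocSet sm) :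
    sm E6 (sm E5 m) = sm E3 m := by
  rw [← sm_assocElem hm, mulE_6_5]

lemma hcomp_6_6 {M : Type*} [AddCommGroup M] [Module ℝ M] {sm : Octo → M → M}
    (h : IsOMod sm) {m : M} (hm : m ∈ assocSet sm) :
    sm E6 (sm E6 m) = -m := by
  rw [← sm_assocElem hm, mulE_6_6, sm_negl h, h.one_smul]

lemma hcomp_6_7 {M : Type*} [AddCommGroup M] [Module ℝ M] {sm : Octo → M → M}
    (h : IsOMod sm) {m : M} (hm : m ∈ assocSet sm) :
    sm E6 (sm E7 m) = -(sm E1 m) := by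
  rw [← sm_assocElem hm, mulE_6_7, sm_negl h]

lemma hcomp_7_1 {M : Type*} [AddCommGroup M] [Module ℝ M] {sm : Octo → M → M}
    (h : IsOMod sm) {m : M} (hm : m ∈ assocSet sm) :
    sm E7 (sm E1 m) = -(sm E6 m) := by
  rw [← sm_assocElem hm, mulE_7_1, sm_negl h]

lemma hcomp_7_2 {M : Type*} [AddCommGroup M] [Module ℝ M] {sm : Octo → M → M}
    (h : IsOMod sm) {m : M} (hm : m ∈ assocSet sm) :
    sm E7 (sm E2 m) = sm E5 m := by
  rw [← sm_assocElem hm, mulE_7_2]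

lemma hcomp_7_3 {M : Type*} [AddCommGroup M] [Module ℝ M] {sm : Octo → M → M}
    (h : IsOMod sm) {m : M} (hm : m ∈ assocSet sm) :
    sm E7 (sm E3 m) = sm E4 m := by
  rw [← sm_assocElem hm, mulE_7_3]

lemma hcomp_7_4 {M : Type*} [AddCommGroup M] [Module ℝ M] {sm : Octo → M → M}
    (h : IsOMod sm) {m : M} (hm : m ∈ assocSet sm) :
    sm E7 (sm E4 m) = -(sm E3 m) := by
  rw [← sm_assocElem hm, mulE_7_4, sm_negl h]

lemma hcomp_7_5 {M : Type*} [AddCommGroup M] [Module ℝ M] {sm : Octo → M → M}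
    (h : IsOMod sm) {m : M} (hm : m ∈ assocSet sm) :
    sm E7 (sm E5 m) = -(sm E2 m) := by
  rw [← sm_assocElem hm, mulE_7_5, sm_negl h]

lemma hcomp_7_6 {M : Type*} [AddCommGroup M] [Module ℝ M] {sm : Octo → M → M}
    (h : IsOMod sm) {m : M} (hm : m ∈ assocSet sm) :
    sm E7 (sm E6 m) = sm E1 m := by
  rw [← sm_assocElem hm, mulE_7_6]

lemma hcomp_7_7 {M : Type*} [AddCommGroup M] [Module ℝ M] {sm : Octo → M → M}
    (h : IsOMod sm) {m : M} (hm : m ∈ assocSet sm) :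
    sm E7 (sm E7 m) = -m := by
  rw [← sm_assocElem hm, mulE_7_7, sm_negl h, h.one_smul]

set_option maxHeartbeats 2000000 in
lemma key {M : Type*} [AddCommGroup M] [Module ℝ M] {sm : Octo → M → M}
    (h : IsOMod sm) (m0 m1 m2 m3 m4 m5 m6 m7 : M)
    (a0 : m0 ∈ assocSet sm) (a1 : m1 ∈ assocSet sm) (a2 : m2 ∈ assocSet sm)
    (a3 : m3 ∈ assocSet sm) (a4 : m4 ∈ assocSet sm) (a5 : m5 ∈ assocSet sm)
    (a6 : m6 ∈ assocSet sm) (a7 : m7 ∈ assocSet sm)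
    (hrel : m0 + sm E1 m1 + sm E2 m2 + sm E3 m3 + sm E4 m4 + sm E5 m5 + sm E6 m6 + sm E7 m7 = 0) :
    m0 = 0 ∧ m1 = 0 ∧ m2 = 0 ∧ m3 = 0 ∧ m4 = 0 ∧ m5 = 0 ∧ m6 = 0 ∧ m7 = 0 := by
  have h_1 : -(m1) + sm E1 m0 + -(sm E2 m3) + sm E3 m2 + -(sm E4 m5) + sm E5 m4 + sm E6 m7 + -(sm E7 m6) = 0 := by
    have hx := congrArg (sm E1) hrel
    simp only [h.smul_add, sm_neg h, sm_zero h] at hx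
    rw [hcomp_1_1 h a1, hcomp_1_2 h a2, hcomp_1_3 h a3, hcomp_1_4 h a4, hcomp_1_5 h a5, hcomp_1_6 h a6, hcomp_1_7 h a7] at hx
    linear_combination (norm := module) hx
  have h_2 : -(m2) + sm E1 m3 + sm E2 m0 + -(sm E3 m1) + -(sm E4 m6) + -(sm E5 m7) + sm E6 m4 + sm E7 m5 = 0 := by
    have hx := congrArg (sm E2) hrel
    simp only [h.smul_add, sm_neg h, sm_zero h] at hx
    rw [hcomp_2_1 h a1, hcomp_2_2 h a2, hcomp_2_3 h a3, hcomp_2_4 h a4, hcomp_2_5 h a5, hcomp_2_6 h a6, hcomp_2_7 h a7] at hx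
    linear_combination (norm := module) hx
  have h_3 : -(m3) + -(sm E1 m2) + sm E2 m1 + sm E3 m0 + -(sm E4 m7) + sm E5 m6 + -(sm E6 m5) + sm E7 m4 = 0 := by
    have hx := congrArg (sm E3) hrel
    simp only [h.smul_add, sm_neg h, sm_zero h] at hx
    rw [hcomp_3_1 h a1, hcomp_3_2 h a2, hcomp_3_3 h a3, hcomp_3_4 h a4, hcomp_3_5 h a5, hcomp_3_6 h a6, hcomp_3_7 h a7] at hx
    linear_combination (norm := module) hx
  have h_4 : -(m4) + sm E1 m5 + sm E2 m6 + sm E3 m7 + sm E4 m0 + -(sm E5 m1) + -(sm E6 m2) + -(sm E7 m3) = 0 := by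
    have hx := congrArg (sm E4) hrel
    simp only [h.smul_add, sm_neg h, sm_zero h] at hx
    rw [hcomp_4_1 h a1, hcomp_4_2 h a2, hcomp_4_3 h a3, hcomp_4_4 h a4, hcomp_4_5 h a5, hcomp_4_6 h a6, hcomp_4_7 h a7] at hx
    linear_combination (norm := module) hx
  have h_5 : -(m5) + -(sm E1 m4) + sm E2 m7 + -(sm E3 m6) + sm E4 m1 + sm E5 m0 + sm E6 m3 + -(sm E7 m2) = 0 := by
    have hx := congrArg (sm E5) hrel
    simp only [h.smul_add, sm_neg h, sm_zero h] at hx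
    rw [hcomp_5_1 h a1, hcomp_5_2 h a2, hcomp_5_3 h a3, hcomp_5_4 h a4, hcomp_5_5 h a5, hcomp_5_6 h a6, hcomp_5_7 h a7] at hx
    linear_combination (norm := module) hx
  have h_6 : -(m6) + -(sm E1 m7) + -(sm E2 m4) + sm E3 m5 + sm E4 m2 + -(sm E5 m3) + sm E6 m0 + sm E7 m1 = 0 := by
    have hx := congrArg (sm E6) hrel
    simp only [h.smul_add, sm_neg h, sm_zero h] at hx
    rw [hcomp_6_1 h a1, hcomp_6_2 h a2, hcomp_6_3 h a3, hcomp_6_4 h a4, hcomp_6_5 h a5, hcomp_6_6 h a6, hcomp_6_7 h a7] at hx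
    linear_combination (norm := module) hx
  have h_7 : -(m7) + sm E1 m6 + -(sm E2 m5) + -(sm E3 m4) + sm E4 m3 + sm E5 m2 + -(sm E6 m1) + sm E7 m0 = 0 := by
    have hx := congrArg (sm E7) hrel
    simp only [h.smul_add, sm_neg h, sm_zero h] at hx
    rw [hcomp_7_1 h a1, hcomp_7_2 h a2, hcomp_7_3 h a3, hcomp_7_4 h a4, hcomp_7_5 h a5, hcomp_7_6 h a6, hcomp_7_7 h a7] at hx
    linear_combination (norm := module) hx
  have h_1_2 : -(m3) + -(sm E1 m2) + sm E2 m1 + sm E3 m0 + sm E4 m7 + -(sm E5 m6) + sm E6 m5 + -(sm E7 m4) = 0 := by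
    have hx := congrArg (sm E1) h_2
    simp only [h.smul_add, sm_neg h, sm_zero h] at hx
    rw [hcomp_1_1 h a3, hcomp_1_2 h a0, hcomp_1_3 h a1, hcomp_1_4 h a6, hcomp_1_5 h a7, hcomp_1_6 h a4, hcomp_1_7 h a5] at hx
    linear_combination (norm := module) hx
  have h_1_3 : m2 + -(sm E1 m3) + -(sm E2 m0) + sm E3 m1 + -(sm E4 m6) + -(sm E5 m7) + sm E6 m4 + sm E7 m5 = 0 := by
    have hx := congrArg (sm E1) h_3
    simp only [h.smul_add, sm_neg h, sm_zero h] at hx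
    rw [hcomp_1_1 h a2, hcomp_1_2 h a1, hcomp_1_3 h a0, hcomp_1_4 h a7, hcomp_1_5 h a6, hcomp_1_6 h a5, hcomp_1_7 h a4] at hx
    linear_combination (norm := module) hx
  have h_1_4 : -(m5) + -(sm E1 m4) + -(sm E2 m7) + sm E3 m6 + sm E4 m1 + sm E5 m0 + -(sm E6 m3) + sm E7 m2 = 0 := by
    have hx := congrArg (sm E1) h_4
    simp only [h.smul_add, sm_neg h, sm_zero h] at hx
    rw [hcomp_1_1 h a5, hcomp_1_2 h a6, hcomp_1_3 h a7, hcomp_1_4 h a0, hcomp_1_5 h a1, hcomp_1_6 h a2, hcomp_1_7 h a3] at hx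
    linear_combination (norm := module) hx
  have h_1_5 : m4 + -(sm E1 m5) + sm E2 m6 + sm E3 m7 + -(sm E4 m0) + sm E5 m1 + -(sm E6 m2) + -(sm E7 m3) = 0 := by
    have hx := congrArg (sm E1) h_5
    simp only [h.smul_add, sm_neg h, sm_zero h] at hx
    rw [hcomp_1_1 h a4, hcomp_1_2 h a7, hcomp_1_3 h a6, hcomp_1_4 h a1, hcomp_1_5 h a0, hcomp_1_6 h a3, hcomp_1_7 h a2] at hx
    linear_combination (norm := module) hx
  have h_1_6 : m7 + -(sm E1 m6) + -(sm E2 m5) + -(sm E3 m4) + sm E4 m3 + sm E5 m2 + sm E6 m1 + -(sm E7 m0) = 0 := by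
    have hx := congrArg (sm E1) h_6
    simp only [h.smul_add, sm_neg h, sm_zero h] at hx
    rw [hcomp_1_1 h a7, hcomp_1_2 h a4, hcomp_1_3 h a5, hcomp_1_4 h a2, hcomp_1_5 h a3, hcomp_1_6 h a0, hcomp_1_7 h a1] at hx
    linear_combination (norm := module) hx
  have h_1_7 : -(m6) + -(sm E1 m7) + sm E2 m4 + -(sm E3 m5) + -(sm E4 m2) + sm E5 m3 + sm E6 m0 + sm E7 m1 = 0 := by
    have hx := congrArg (sm E1) h_7
    simp only [h.smul_add, sm_neg h, sm_zero h] at hx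
    rw [hcomp_1_1 h a6, hcomp_1_2 h a5, hcomp_1_3 h a4, hcomp_1_4 h a3, hcomp_1_5 h a2, hcomp_1_6 h a1, hcomp_1_7 h a0] at hx
    linear_combination (norm := module) hx
  have h_2_3 : -(m1) + sm E1 m0 + -(sm E2 m3) + sm E3 m2 + sm E4 m5 + -(sm E5 m4) + -(sm E6 m7) + sm E7 m6 = 0 := by
    have hx := congrArg (sm E2) h_3
    simp only [h.smul_add, sm_neg h, sm_zero h] at hx
    rw [hcomp_2_1 h a2, hcomp_2_2 h a1, hcomp_2_3 h a0, hcomp_2_4 h a7, hcomp_2_5 h a6, hcomp_2_6 h a5, hcomp_2_7 h a4] at hx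
    linear_combination (norm := module) hx
  have h_2_4 : -(m6) + sm E1 m7 + -(sm E2 m4) + -(sm E3 m5) + sm E4 m2 + sm E5 m3 + sm E6 m0 + -(sm E7 m1) = 0 := by
    have hx := congrArg (sm E2) h_4
    simp only [h.smul_add, sm_neg h, sm_zero h] at hx
    rw [hcomp_2_1 h a5, hcomp_2_2 h a6, hcomp_2_3 h a7, hcomp_2_4 h a0, hcomp_2_5 h a1, hcomp_2_6 h a2, hcomp_2_7 h a3] at hx
    linear_combination (norm := module) hx
  have h_2_5 : -(m7) + -(sm E1 m6) + -(sm E2 m5) + sm E3 m4 + -(sm E4 m3) + sm E5 m2 + sm E6 m1 + sm E7 m0 = 0 := by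
    have hx := congrArg (sm E2) h_5
    simp only [h.smul_add, sm_neg h, sm_zero h] at hx
    rw [hcomp_2_1 h a4, hcomp_2_2 h a7, hcomp_2_3 h a6, hcomp_2_4 h a1, hcomp_2_5 h a0, hcomp_2_6 h a3, hcomp_2_7 h a2] at hx
    linear_combination (norm := module) hx
  have h_2_6 : m4 + sm E1 m5 + -(sm E2 m6) + sm E3 m7 + -(sm E4 m0) + -(sm E5 m1) + sm E6 m2 + -(sm E7 m3) = 0 := by
    have hx := congrArg (sm E2) h_6
    simp only [h.smul_add, sm_neg h, sm_zero h] at hx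
    rw [hcomp_2_1 h a7, hcomp_2_2 h a4, hcomp_2_3 h a5, hcomp_2_4 h a2, hcomp_2_5 h a3, hcomp_2_6 h a0, hcomp_2_7 h a1] at hx
    linear_combination (norm := module) hx
  have h_2_7 : m5 + -(sm E1 m4) + -(sm E2 m7) + -(sm E3 m6) + sm E4 m1 + -(sm E5 m0) + sm E6 m3 + sm E7 m2 = 0 := by
    have hx := congrArg (sm E2) h_7
    simp only [h.smul_add, sm_neg h, sm_zero h] at hx
    rw [hcomp_2_1 h a6, hcomp_2_2 h a5, hcomp_2_3 h a4, hcomp_2_4 h a3, hcomp_2_5 h a2, hcomp_2_6 h a1, hcomp_2_7 h a0] at hx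
    linear_combination (norm := module) hx
  have h_3_4 : -(m7) + -(sm E1 m6) + sm E2 m5 + -(sm E3 m4) + sm E4 m3 + -(sm E5 m2) + sm E6 m1 + sm E7 m0 = 0 := by
    have hx := congrArg (sm E3) h_4
    simp only [h.smul_add, sm_neg h, sm_zero h] at hx
    rw [hcomp_3_1 h a5, hcomp_3_2 h a6, hcomp_3_3 h a7, hcomp_3_4 h a0, hcomp_3_5 h a1, hcomp_3_6 h a2, hcomp_3_7 h a3] at hx
    linear_combination (norm := module) hx
  have h_3_5 : m6 + -(sm E1 m7) + -(sm E2 m4) + -(sm E3 m5) + sm E4 m2 + sm E5 m3 + -(sm E6 m0) + sm E7 m1 = 0 := by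
    have hx := congrArg (sm E3) h_5
    simp only [h.smul_add, sm_neg h, sm_zero h] at hx
    rw [hcomp_3_1 h a4, hcomp_3_2 h a7, hcomp_3_3 h a6, hcomp_3_4 h a1, hcomp_3_5 h a0, hcomp_3_6 h a3, hcomp_3_7 h a2] at hx
    linear_combination (norm := module) hx
  have h_3_6 : -(m5) + sm E1 m4 + -(sm E2 m7) + -(sm E3 m6) + -(sm E4 m1) + sm E5 m0 + sm E6 m3 + sm E7 m2 = 0 := by
    have hx := congrArg (sm E3) h_6
    simp only [h.smul_add, sm_neg h, sm_zero h] at hx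
    rw [hcomp_3_1 h a7, hcomp_3_2 h a4, hcomp_3_3 h a5, hcomp_3_4 h a2, hcomp_3_5 h a3, hcomp_3_6 h a0, hcomp_3_7 h a1] at hx
    linear_combination (norm := module) hx
  have h_3_7 : m4 + sm E1 m5 + sm E2 m6 + -(sm E3 m7) + -(sm E4 m0) + -(sm E5 m1) + -(sm E6 m2) + sm E7 m3 = 0 := by
    have hx := congrArg (sm E3) h_7
    simp only [h.smul_add, sm_neg h, sm_zero h] at hx
    rw [hcomp_3_1 h a6, hcomp_3_2 h a5, hcomp_3_3 h a4, hcomp_3_4 h a3, hcomp_3_5 h a2, hcomp_3_6 h a1, hcomp_3_7 h a0] at hx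
    linear_combination (norm := module) hx
  have h_4_5 : -(m1) + sm E1 m0 + sm E2 m3 + -(sm E3 m2) + -(sm E4 m5) + sm E5 m4 + -(sm E6 m7) + sm E7 m6 = 0 := by
    have hx := congrArg (sm E4) h_5
    simp only [h.smul_add, sm_neg h, sm_zero h] at hx
    rw [hcomp_4_1 h a4, hcomp_4_2 h a7, hcomp_4_3 h a6, hcomp_4_4 h a1, hcomp_4_5 h a0, hcomp_4_6 h a3, hcomp_4_7 h a2] at hx
    linear_combination (norm := module) hx
  have h_4_6 : -(m2) + -(sm E1 m3) + sm E2 m0 + sm E3 m1 + -(sm E4 m6) + sm E5 m7 + sm E6 m4 + -(sm E7 m5) = 0 := by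
    have hx := congrArg (sm E4) h_6
    simp only [h.smul_add, sm_neg h, sm_zero h] at hx
    rw [hcomp_4_1 h a7, hcomp_4_2 h a4, hcomp_4_3 h a5, hcomp_4_4 h a2, hcomp_4_5 h a3, hcomp_4_6 h a0, hcomp_4_7 h a1] at hx
    linear_combination (norm := module) hx
  have h_4_7 : -(m3) + sm E1 m2 + -(sm E2 m1) + sm E3 m0 + -(sm E4 m7) + -(sm E5 m6) + sm E6 m5 + sm E7 m4 = 0 := by
    have hx := congrArg (sm E4) h_7
    simp only [h.smul_add, sm_neg h, sm_zero h] at hx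
    rw [hcomp_4_1 h a6, hcomp_4_2 h a5, hcomp_4_3 h a4, hcomp_4_4 h a3, hcomp_4_5 h a2, hcomp_4_6 h a1, hcomp_4_7 h a0] at hx
    linear_combination (norm := module) hx
  have h_5_6 : m3 + -(sm E1 m2) + sm E2 m1 + -(sm E3 m0) + -(sm E4 m7) + -(sm E5 m6) + sm E6 m5 + sm E7 m4 = 0 := by
    have hx := congrArg (sm E5) h_6
    simp only [h.smul_add, sm_neg h, sm_zero h] at hx
    rw [hcomp_5_1 h a7, hcomp_5_2 h a4, hcomp_5_3 h a5, hcomp_5_4 h a2, hcomp_5_5 h a3, hcomp_5_6 h a0, hcomp_5_7 h a1] at hx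
    linear_combination (norm := module) hx
  have h_5_7 : -(m2) + -(sm E1 m3) + sm E2 m0 + sm E3 m1 + sm E4 m6 + -(sm E5 m7) + -(sm E6 m4) + sm E7 m5 = 0 := by
    have hx := congrArg (sm E5) h_7
    simp only [h.smul_add, sm_neg h, sm_zero h] at hx
    rw [hcomp_5_1 h a6, hcomp_5_2 h a5, hcomp_5_3 h a4, hcomp_5_4 h a3, hcomp_5_5 h a2, hcomp_5_6 h a1, hcomp_5_7 h a0] at hx
    linear_combination (norm := module) hx
  have h_6_7 : m1 + -(sm E1 m0) + -(sm E2 m3) + sm E3 m2 + -(sm E4 m5) + sm E5 m4 + -(sm E6 m7) + sm E7 m6 = 0 := by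
    have hx := congrArg (sm E6) h_7
    simp only [h.smul_add, sm_neg h, sm_zero h] at hx
    rw [hcomp_6_1 h a6, hcomp_6_2 h a5, hcomp_6_3 h a4, hcomp_6_4 h a3, hcomp_6_5 h a2, hcomp_6_6 h a1, hcomp_6_7 h a0] at hx
    linear_combination (norm := module) hx
  have h_1_2_3 : -(m0) + -(sm E1 m1) + -(sm E2 m2) + -(sm E3 m3) + sm E4 m4 + sm E5 m5 + sm E6 m6 + sm E7 m7 = 0 := by
    have hx := congrArg (sm E1) h_2_3
    simp only [h.smul_add, sm_neg h, sm_zero h] at hx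
    rw [hcomp_1_1 h a0, hcomp_1_2 h a3, hcomp_1_3 h a2, hcomp_1_4 h a5, hcomp_1_5 h a4, hcomp_1_6 h a7, hcomp_1_7 h a6] at hx
    linear_combination (norm := module) hx
  have h_1_2_4 : -(m7) + -(sm E1 m6) + sm E2 m5 + -(sm E3 m4) + -(sm E4 m3) + sm E5 m2 + -(sm E6 m1) + -(sm E7 m0) = 0 := by
    have hx := congrArg (sm E1) h_2_4
    simp only [h.smul_add, sm_neg h, sm_zero h] at hx
    rw [hcomp_1_1 h a7, hcomp_1_2 h a4, hcomp_1_3 h a5, hcomp_1_4 h a2, hcomp_1_5 h a3, hcomp_1_6 h a0, hcomp_1_7 h a1] at hx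
    linear_combination (norm := module) hx
  have h_1_2_5 : m6 + -(sm E1 m7) + -(sm E2 m4) + -(sm E3 m5) + -(sm E4 m2) + -(sm E5 m3) + sm E6 m0 + -(sm E7 m1) = 0 := by
    have hx := congrArg (sm E1) h_2_5
    simp only [h.smul_add, sm_neg h, sm_zero h] at hx
    rw [hcomp_1_1 h a6, hcomp_1_2 h a5, hcomp_1_3 h a4, hcomp_1_4 h a3, hcomp_1_5 h a2, hcomp_1_6 h a1, hcomp_1_7 h a0] at hx
    linear_combination (norm := module) hx
  have h_1_2_6 : -(m5) + sm E1 m4 + -(sm E2 m7) + -(sm E3 m6) + sm E4 m1 + -(sm E5 m0) + -(sm E6 m3) + -(sm E7 m2) = 0 := by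
    have hx := congrArg (sm E1) h_2_6
    simp only [h.smul_add, sm_neg h, sm_zero h] at hx
    rw [hcomp_1_1 h a5, hcomp_1_2 h a6, hcomp_1_3 h a7, hcomp_1_4 h a0, hcomp_1_5 h a1, hcomp_1_6 h a2, hcomp_1_7 h a3] at hx
    linear_combination (norm := module) hx
  have h_1_2_7 : m4 + sm E1 m5 + sm E2 m6 + -(sm E3 m7) + sm E4 m0 + sm E5 m1 + sm E6 m2 + -(sm E7 m3) = 0 := by
    have hx := congrArg (sm E1) h_2_7
    simp only [h.smul_add, sm_neg h, sm_zero h] at hx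
    rw [hcomp_1_1 h a4, hcomp_1_2 h a7, hcomp_1_3 h a6, hcomp_1_4 h a1, hcomp_1_5 h a0, hcomp_1_6 h a3, hcomp_1_7 h a2] at hx
    linear_combination (norm := module) hx
  have h_1_3_4 : m6 + -(sm E1 m7) + sm E2 m4 + sm E3 m5 + sm E4 m2 + sm E5 m3 + sm E6 m0 + -(sm E7 m1) = 0 := by
    have hx := congrArg (sm E1) h_3_4
    simp only [h.smul_add, sm_neg h, sm_zero h] at hx
    rw [hcomp_1_1 h a6, hcomp_1_2 h a5, hcomp_1_3 h a4, hcomp_1_4 h a3, hcomp_1_5 h a2, hcomp_1_6 h a1, hcomp_1_7 h a0] at hx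
    linear_combination (norm := module) hx
  have h_1_3_5 : m7 + sm E1 m6 + sm E2 m5 + -(sm E3 m4) + -(sm E4 m3) + sm E5 m2 + sm E6 m1 + sm E7 m0 = 0 := by
    have hx := congrArg (sm E1) h_3_5
    simp only [h.smul_add, sm_neg h, sm_zero h] at hx
    rw [hcomp_1_1 h a7, hcomp_1_2 h a4, hcomp_1_3 h a5, hcomp_1_4 h a2, hcomp_1_5 h a3, hcomp_1_6 h a0, hcomp_1_7 h a1] at hx
    linear_combination (norm := module) hx
  have h_1_3_6 : -(m4) + -(sm E1 m5) + sm E2 m6 + -(sm E3 m7) + -(sm E4 m0) + -(sm E5 m1) + sm E6 m2 + -(sm E7 m3) = 0 := by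
    have hx := congrArg (sm E1) h_3_6
    simp only [h.smul_add, sm_neg h, sm_zero h] at hx
    rw [hcomp_1_1 h a4, hcomp_1_2 h a7, hcomp_1_3 h a6, hcomp_1_4 h a1, hcomp_1_5 h a0, hcomp_1_6 h a3, hcomp_1_7 h a2] at hx
    linear_combination (norm := module) hx
  have h_1_3_7 : -(m5) + sm E1 m4 + sm E2 m7 + sm E3 m6 + sm E4 m1 + -(sm E5 m0) + sm E6 m3 + sm E7 m2 = 0 := by
    have hx := congrArg (sm E1) h_3_7
    simp only [h.smul_add, sm_neg h, sm_zero h] at hx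
    rw [hcomp_1_1 h a5, hcomp_1_2 h a6, hcomp_1_3 h a7, hcomp_1_4 h a0, hcomp_1_5 h a1, hcomp_1_6 h a2, hcomp_1_7 h a3] at hx
    linear_combination (norm := module) hx
  have h_1_4_5 : -(m0) + -(sm E1 m1) + sm E2 m2 + sm E3 m3 + -(sm E4 m4) + -(sm E5 m5) + sm E6 m6 + sm E7 m7 = 0 := by
    have hx := congrArg (sm E1) h_4_5
    simp only [h.smul_add, sm_neg h, sm_zero h] at hx
    rw [hcomp_1_1 h a0, hcomp_1_2 h a3, hcomp_1_3 h a2, hcomp_1_4 h a5, hcomp_1_5 h a4, hcomp_1_6 h a7, hcomp_1_7 h a6] at hx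
    linear_combination (norm := module) hx
  have h_1_4_6 : m3 + -(sm E1 m2) + -(sm E2 m1) + sm E3 m0 + -(sm E4 m7) + -(sm E5 m6) + -(sm E6 m5) + -(sm E7 m4) = 0 := by
    have hx := congrArg (sm E1) h_4_6
    simp only [h.smul_add, sm_neg h, sm_zero h] at hx
    rw [hcomp_1_1 h a3, hcomp_1_2 h a0, hcomp_1_3 h a1, hcomp_1_4 h a6, hcomp_1_5 h a7, hcomp_1_6 h a4, hcomp_1_7 h a5] at hx
    linear_combination (norm := module) hx
  have h_1_4_7 : -(m2) + -(sm E1 m3) + -(sm E2 m0) + -(sm E3 m1) + sm E4 m6 + -(sm E5 m7) + sm E6 m4 + -(sm E7 m5) = 0 := by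
    have hx := congrArg (sm E1) h_4_7
    simp only [h.smul_add, sm_neg h, sm_zero h] at hx
    rw [hcomp_1_1 h a2, hcomp_1_2 h a1, hcomp_1_3 h a0, hcomp_1_4 h a7, hcomp_1_5 h a6, hcomp_1_6 h a5, hcomp_1_7 h a4] at hx
    linear_combination (norm := module) hx
  have h_1_5_6 : m2 + sm E1 m3 + sm E2 m0 + sm E3 m1 + sm E4 m6 + -(sm E5 m7) + sm E6 m4 + -(sm E7 m5) = 0 := by
    have hx := congrArg (sm E1) h_5_6
    simp only [h.smul_add, sm_neg h, sm_zero h] at hx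
    rw [hcomp_1_1 h a2, hcomp_1_2 h a1, hcomp_1_3 h a0, hcomp_1_4 h a7, hcomp_1_5 h a6, hcomp_1_6 h a5, hcomp_1_7 h a4] at hx
    linear_combination (norm := module) hx
  have h_1_5_7 : m3 + -(sm E1 m2) + -(sm E2 m1) + sm E3 m0 + sm E4 m7 + sm E5 m6 + sm E6 m5 + sm E7 m4 = 0 := by
    have hx := congrArg (sm E1) h_5_7
    simp only [h.smul_add, sm_neg h, sm_zero h] at hx
    rw [hcomp_1_1 h a3, hcomp_1_2 h a0, hcomp_1_3 h a1, hcomp_1_4 h a6, hcomp_1_5 h a7, hcomp_1_6 h a4, hcomp_1_7 h a5] at hx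
    linear_combination (norm := module) hx
  have h_1_6_7 : m0 + sm E1 m1 + -(sm E2 m2) + -(sm E3 m3) + -(sm E4 m4) + -(sm E5 m5) + sm E6 m6 + sm E7 m7 = 0 := by
    have hx := congrArg (sm E1) h_6_7
    simp only [h.smul_add, sm_neg h, sm_zero h] at hx
    rw [hcomp_1_1 h a0, hcomp_1_2 h a3, hcomp_1_3 h a2, hcomp_1_4 h a5, hcomp_1_5 h a4, hcomp_1_6 h a7, hcomp_1_7 h a6] at hx
    linear_combination (norm := module) hx
  have h_2_3_4 : -(m5) + -(sm E1 m4) + -(sm E2 m7) + sm E3 m6 + -(sm E4 m1) + -(sm E5 m0) + sm E6 m3 + -(sm E7 m2) = 0 := by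
    have hx := congrArg (sm E2) h_3_4
    simp only [h.smul_add, sm_neg h, sm_zero h] at hx
    rw [hcomp_2_1 h a6, hcomp_2_2 h a5, hcomp_2_3 h a4, hcomp_2_4 h a3, hcomp_2_5 h a2, hcomp_2_6 h a1, hcomp_2_7 h a0] at hx
    linear_combination (norm := module) hx
  have h_2_3_5 : m4 + -(sm E1 m5) + sm E2 m6 + sm E3 m7 + sm E4 m0 + -(sm E5 m1) + sm E6 m2 + sm E7 m3 = 0 := by
    have hx := congrArg (sm E2) h_3_5
    simp only [h.smul_add, sm_neg h, sm_zero h] at hx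
    rw [hcomp_2_1 h a7, hcomp_2_2 h a4, hcomp_2_3 h a5, hcomp_2_4 h a2, hcomp_2_5 h a3, hcomp_2_6 h a0, hcomp_2_7 h a1] at hx
    linear_combination (norm := module) hx
  have h_2_3_6 : m7 + -(sm E1 m6) + -(sm E2 m5) + -(sm E3 m4) + -(sm E4 m3) + -(sm E5 m2) + -(sm E6 m1) + sm E7 m0 = 0 := by
    have hx := congrArg (sm E2) h_3_6
    simp only [h.smul_add, sm_neg h, sm_zero h] at hx
    rw [hcomp_2_1 h a4, hcomp_2_2 h a7, hcomp_2_3 h a6, hcomp_2_4 h a1, hcomp_2_5 h a0, hcomp_2_6 h a3, hcomp_2_7 h a2] at hx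
    linear_combination (norm := module) hx
  have h_2_3_7 : -(m6) + -(sm E1 m7) + sm E2 m4 + -(sm E3 m5) + sm E4 m2 + -(sm E5 m3) + -(sm E6 m0) + -(sm E7 m1) = 0 := by
    have hx := congrArg (sm E2) h_3_7
    simp only [h.smul_add, sm_neg h, sm_zero h] at hx
    rw [hcomp_2_1 h a5, hcomp_2_2 h a6, hcomp_2_3 h a7, hcomp_2_4 h a0, hcomp_2_5 h a1, hcomp_2_6 h a2, hcomp_2_7 h a3] at hx
    linear_combination (norm := module) hx
  have h_2_4_5 : -(m3) + -(sm E1 m2) + -(sm E2 m1) + -(sm E3 m0) + sm E4 m7 + -(sm E5 m6) + -(sm E6 m5) + sm E7 m4 = 0 := by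
    have hx := congrArg (sm E2) h_4_5
    simp only [h.smul_add, sm_neg h, sm_zero h] at hx
    rw [hcomp_2_1 h a0, hcomp_2_2 h a3, hcomp_2_3 h a2, hcomp_2_4 h a5, hcomp_2_5 h a4, hcomp_2_6 h a7, hcomp_2_7 h a6] at hx
    linear_combination (norm := module) hx
  have h_2_4_6 : -(m0) + sm E1 m1 + -(sm E2 m2) + sm E3 m3 + -(sm E4 m4) + sm E5 m5 + -(sm E6 m6) + sm E7 m7 = 0 := by
    have hx := congrArg (sm E2) h_4_6
    simp only [h.smul_add, sm_neg h, sm_zero h] at hx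
    rw [hcomp_2_1 h a3, hcomp_2_2 h a0, hcomp_2_3 h a1, hcomp_2_4 h a6, hcomp_2_5 h a7, hcomp_2_6 h a4, hcomp_2_7 h a5] at hx
    linear_combination (norm := module) hx
  have h_2_4_7 : m1 + sm E1 m0 + -(sm E2 m3) + -(sm E3 m2) + -(sm E4 m5) + -(sm E5 m4) + -(sm E6 m7) + -(sm E7 m6) = 0 := by
    have hx := congrArg (sm E2) h_4_7
    simp only [h.smul_add, sm_neg h, sm_zero h] at hx
    rw [hcomp_2_1 h a2, hcomp_2_2 h a1, hcomp_2_3 h a0, hcomp_2_4 h a7, hcomp_2_5 h a6, hcomp_2_6 h a5, hcomp_2_7 h a4] at hx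
    linear_combination (norm := module) hx
  have h_2_5_6 : -(m1) + -(sm E1 m0) + sm E2 m3 + sm E3 m2 + -(sm E4 m5) + -(sm E5 m4) + -(sm E6 m7) + -(sm E7 m6) = 0 := by
    have hx := congrArg (sm E2) h_5_6
    simp only [h.smul_add, sm_neg h, sm_zero h] at hx
    rw [hcomp_2_1 h a2, hcomp_2_2 h a1, hcomp_2_3 h a0, hcomp_2_4 h a7, hcomp_2_5 h a6, hcomp_2_6 h a5, hcomp_2_7 h a4] at hx
    linear_combination (norm := module) hx
  have h_2_5_7 : -(m0) + sm E1 m1 + -(sm E2 m2) + sm E3 m3 + sm E4 m4 + -(sm E5 m5) + sm E6 m6 + -(sm E7 m7) = 0 := by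
    have hx := congrArg (sm E2) h_5_7
    simp only [h.smul_add, sm_neg h, sm_zero h] at hx
    rw [hcomp_2_1 h a3, hcomp_2_2 h a0, hcomp_2_3 h a1, hcomp_2_4 h a6, hcomp_2_5 h a7, hcomp_2_6 h a4, hcomp_2_7 h a5] at hx
    linear_combination (norm := module) hx
  have h_2_6_7 : m3 + sm E1 m2 + sm E2 m1 + sm E3 m0 + sm E4 m7 + -(sm E5 m6) + -(sm E6 m5) + sm E7 m4 = 0 := by
    have hx := congrArg (sm E2) h_6_7
    simp only [h.smul_add, sm_neg h, sm_zero h] at hx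
    rw [hcomp_2_1 h a0, hcomp_2_2 h a3, hcomp_2_3 h a2, hcomp_2_4 h a5, hcomp_2_5 h a4, hcomp_2_6 h a7, hcomp_2_7 h a6] at hx
    linear_combination (norm := module) hx
  have h_3_4_5 : m2 + -(sm E1 m3) + sm E2 m0 + -(sm E3 m1) + -(sm E4 m6) + -(sm E5 m7) + -(sm E6 m4) + -(sm E7 m5) = 0 := by
    have hx := congrArg (sm E3) h_4_5
    simp only [h.smul_add, sm_neg h, sm_zero h] at hx
    rw [hcomp_3_1 h a0, hcomp_3_2 h a3, hcomp_3_3 h a2, hcomp_3_4 h a5, hcomp_3_5 h a4, hcomp_3_6 h a7, hcomp_3_7 h a6] at hx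
    linear_combination (norm := module) hx
  have h_3_4_6 : -(m1) + -(sm E1 m0) + -(sm E2 m3) + -(sm E3 m2) + sm E4 m5 + sm E5 m4 + -(sm E6 m7) + -(sm E7 m6) = 0 := by
    have hx := congrArg (sm E3) h_4_6
    simp only [h.smul_add, sm_neg h, sm_zero h] at hx
    rw [hcomp_3_1 h a3, hcomp_3_2 h a0, hcomp_3_3 h a1, hcomp_3_4 h a6, hcomp_3_5 h a7, hcomp_3_6 h a4, hcomp_3_7 h a5] at hx
    linear_combination (norm := module) hx
  have h_3_4_7 : -(m0) + sm E1 m1 + sm E2 m2 + -(sm E3 m3) + -(sm E4 m4) + sm E5 m5 + sm E6 m6 + -(sm E7 m7) = 0 := by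
    have hx := congrArg (sm E3) h_4_7
    simp only [h.smul_add, sm_neg h, sm_zero h] at hx
    rw [hcomp_3_1 h a2, hcomp_3_2 h a1, hcomp_3_3 h a0, hcomp_3_4 h a7, hcomp_3_5 h a6, hcomp_3_6 h a5, hcomp_3_7 h a4] at hx
    linear_combination (norm := module) hx
  have h_3_5_6 : m0 + -(sm E1 m1) + -(sm E2 m2) + sm E3 m3 + -(sm E4 m4) + sm E5 m5 + sm E6 m6 + -(sm E7 m7) = 0 := by
    have hx := congrArg (sm E3) h_5_6
    simp only [h.smul_add, sm_neg h, sm_zero h] at hx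
    rw [hcomp_3_1 h a2, hcomp_3_2 h a1, hcomp_3_3 h a0, hcomp_3_4 h a7, hcomp_3_5 h a6, hcomp_3_6 h a5, hcomp_3_7 h a4] at hx
    linear_combination (norm := module) hx
  have h_3_5_7 : -(m1) + -(sm E1 m0) + -(sm E2 m3) + -(sm E3 m2) + -(sm E4 m5) + -(sm E5 m4) + sm E6 m7 + sm E7 m6 = 0 := by
    have hx := congrArg (sm E3) h_5_7
    simp only [h.smul_add, sm_neg h, sm_zero h] at hx
    rw [hcomp_3_1 h a3, hcomp_3_2 h a0, hcomp_3_3 h a1, hcomp_3_4 h a6, hcomp_3_5 h a7, hcomp_3_6 h a4, hcomp_3_7 h a5] at hx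
    linear_combination (norm := module) hx
  have h_3_6_7 : -(m2) + sm E1 m3 + -(sm E2 m0) + sm E3 m1 + -(sm E4 m6) + -(sm E5 m7) + -(sm E6 m4) + -(sm E7 m5) = 0 := by
    have hx := congrArg (sm E3) h_6_7
    simp only [h.smul_add, sm_neg h, sm_zero h] at hx
    rw [hcomp_3_1 h a0, hcomp_3_2 h a3, hcomp_3_3 h a2, hcomp_3_4 h a5, hcomp_3_5 h a4, hcomp_3_6 h a7, hcomp_3_7 h a6] at hx
    linear_combination (norm := module) hx
  have h_4_5_6 : m7 + -(sm E1 m6) + sm E2 m5 + sm E3 m4 + sm E4 m3 + sm E5 m2 + -(sm E6 m1) + sm E7 m0 = 0 := by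
    have hx := congrArg (sm E4) h_5_6
    simp only [h.smul_add, sm_neg h, sm_zero h] at hx
    rw [hcomp_4_1 h a2, hcomp_4_2 h a1, hcomp_4_3 h a0, hcomp_4_4 h a7, hcomp_4_5 h a6, hcomp_4_6 h a5, hcomp_4_7 h a4] at hx
    linear_combination (norm := module) hx
  have h_4_5_7 : -(m6) + -(sm E1 m7) + -(sm E2 m4) + sm E3 m5 + -(sm E4 m2) + sm E5 m3 + -(sm E6 m0) + -(sm E7 m1) = 0 := by
    have hx := congrArg (sm E4) h_5_7
    simp only [h.smul_add, sm_neg h, sm_zero h] at hx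
    rw [hcomp_4_1 h a3, hcomp_4_2 h a0, hcomp_4_3 h a1, hcomp_4_4 h a6, hcomp_4_5 h a7, hcomp_4_6 h a4, hcomp_4_7 h a5] at hx
    linear_combination (norm := module) hx
  have h_4_6_7 : m5 + sm E1 m4 + -(sm E2 m7) + sm E3 m6 + sm E4 m1 + sm E5 m0 + sm E6 m3 + -(sm E7 m2) = 0 := by
    have hx := congrArg (sm E4) h_6_7
    simp only [h.smul_add, sm_neg h, sm_zero h] at hx
    rw [hcomp_4_1 h a0, hcomp_4_2 h a3, hcomp_4_3 h a2, hcomp_4_4 h a5, hcomp_4_5 h a4, hcomp_4_6 h a7, hcomp_4_7 h a6] at hx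
    linear_combination (norm := module) hx
  have h_5_6_7 : -(m4) + sm E1 m5 + sm E2 m6 + sm E3 m7 + -(sm E4 m0) + sm E5 m1 + sm E6 m2 + sm E7 m3 = 0 := by
    have hx := congrArg (sm E5) h_6_7
    simp only [h.smul_add, sm_neg h, sm_zero h] at hx
    rw [hcomp_5_1 h a0, hcomp_5_2 h a3, hcomp_5_3 h a2, hcomp_5_4 h a5, hcomp_5_5 h a4, hcomp_5_6 h a7, hcomp_5_7 h a6] at hx
    linear_combination (norm := module) hx
  refine ⟨?_, ?_, ?_, ?_, ?_, ?_, ?_, ?_⟩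
  · linear_combination (norm := module) ((1:ℝ)/8) • hrel + (-(1:ℝ)/8) • h_1_2_3 + (-(1:ℝ)/8) • h_1_4_5 + ((1:ℝ)/8) • h_1_6_7 + (-(1:ℝ)/8) • h_2_4_6 + (-(1:ℝ)/8) • h_2_5_7 + (-(1:ℝ)/8) • h_3_4_7 + ((1:ℝ)/8) • h_3_5_6
  · linear_combination (norm := module) (-(1:ℝ)/8) • h_1 + (-(1:ℝ)/8) • h_2_3 + (-(1:ℝ)/8) • h_4_5 + ((1:ℝ)/8) • h_6_7 + ((1:ℝ)/8) • h_2_4_7 + (-(1:ℝ)/8) • h_2_5_6 + (-(1:ℝ)/8) • h_3_4_6 + (-(1:ℝ)/8) • h_3_5_7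
  · linear_combination (norm := module) (-(1:ℝ)/8) • h_2 + ((1:ℝ)/8) • h_1_3 + (-(1:ℝ)/8) • h_4_6 + (-(1:ℝ)/8) • h_5_7 + (-(1:ℝ)/8) • h_1_4_7 + ((1:ℝ)/8) • h_1_5_6 + ((1:ℝ)/8) • h_3_4_5 + (-(1:ℝ)/8) • h_3_6_7
  · linear_combination (norm := module) (-(1:ℝ)/8) • h_3 + (-(1:ℝ)/8) • h_1_2 + (-(1:ℝ)/8) • h_4_7 + ((1:ℝ)/8) • h_5_6 + ((1:ℝ)/8) • h_1_4_6 + ((1:ℝ)/8) • h_1_5_7 + (-(1:ℝ)/8) • h_2_4_5 + ((1:ℝ)/8) • h_2_6_7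
  · linear_combination (norm := module) (-(1:ℝ)/8) • h_4 + ((1:ℝ)/8) • h_1_5 + ((1:ℝ)/8) • h_2_6 + ((1:ℝ)/8) • h_3_7 + ((1:ℝ)/8) • h_1_2_7 + (-(1:ℝ)/8) • h_1_3_6 + ((1:ℝ)/8) • h_2_3_5 + (-(1:ℝ)/8) • h_5_6_7
  · linear_combination (norm := module) (-(1:ℝ)/8) • h_5 + (-(1:ℝ)/8) • h_1_4 + ((1:ℝ)/8) • h_2_7 + (-(1:ℝ)/8) • h_3_6 + (-(1:ℝ)/8) • h_1_2_6 + (-(1:ℝ)/8) • h_1_3_7 + (-(1:ℝ)/8) • h_2_3_4 + ((1:ℝ)/8) • h_4_6_7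
  · linear_combination (norm := module) (-(1:ℝ)/8) • h_6 + (-(1:ℝ)/8) • h_1_7 + (-(1:ℝ)/8) • h_2_4 + ((1:ℝ)/8) • h_3_5 + ((1:ℝ)/8) • h_1_2_5 + ((1:ℝ)/8) • h_1_3_4 + (-(1:ℝ)/8) • h_2_3_7 + (-(1:ℝ)/8) • h_4_5_7
  · linear_combination (norm := module) (-(1:ℝ)/8) • h_7 + ((1:ℝ)/8) • h_1_6 + (-(1:ℝ)/8) • h_2_5 + (-(1:ℝ)/8) • h_3_4 + (-(1:ℝ)/8) • h_1_2_4 + ((1:ℝ)/8) • h_1_3_5 + ((1:ℝ)/8) • h_2_3_6 + ((1:ℝ)/8) • h_4_5_6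

section
variable {M : Type*} [AddCommGroup M] [Module ℝ M] {sm : Octo → M → M}

lemma partA (h : IsOMod sm) (n : ℕ) (x : Fin n → M) (r : Fin n → Octo)
    (hx : ∀ i, x i ∈ assocSet sm) (hli : LinearIndependent ℝ x)
    (hsum : (∑ i, sm (r i) (x i)) = 0) : ∀ i, r i = 0 := by
  classical
  have t1 : sm E1 (∑ i, (r i).p1.imI • x i) = ∑ i, (r i).p1.imI • sm E1 (x i) := by
    rw [show sm E1 (∑ i, (r i).p1.imI • x i) = smL h E1 (∑ i, (r i).p1.imI • x i) from rfl,
      map_sum]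
    simp only [map_smul, smL_apply]
  have t2 : sm E2 (∑ i, (r i).p1.imJ • x i) = ∑ i, (r i).p1.imJ • sm E2 (x i) := by
    rw [show sm E2 (∑ i, (r i).p1.imJ • x i) = smL h E2 (∑ i, (r i).p1.imJ • x i) from rfl,
      map_sum]
    simp only [map_smul, smL_apply]
  have t3 : sm E3 (∑ i, (r i).p1.imK • x i) = ∑ i, (r i).p1.imK • sm E3 (x i) := by
    rw [show sm E3 (∑ i, (r i).p1.imK • x i) = smL h E3 (∑ i, (r i).p1.imK • x i) from rfl,
      map_sum]
    simp only [map_smul, smL_apply]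
  have t4 : sm E4 (∑ i, (r i).p2.re • x i) = ∑ i, (r i).p2.re • sm E4 (x i) := by
    rw [show sm E4 (∑ i, (r i).p2.re • x i) = smL h E4 (∑ i, (r i).p2.re • x i) from rfl,
      map_sum]
    simp only [map_smul, smL_apply]
  have t5 : sm E5 (∑ i, (r i).p2.imI • x i) = ∑ i, (r i).p2.imI • sm E5 (x i) := by
    rw [show sm E5 (∑ i, (r i).p2.imI • x i) = smL h E5 (∑ i, (r i).p2.imI • x i) from rfl,
      map_sum]
    simp only [map_smul, smL_apply]
  have t6 : sm E6 (∑ i, (r i).p2.imJ • x i) = ∑ i, (r i).p2.imJ • sm E6 (x i) := by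
    rw [show sm E6 (∑ i, (r i).p2.imJ • x i) = smL h E6 (∑ i, (r i).p2.imJ • x i) from rfl,
      map_sum]
    simp only [map_smul, smL_apply]
  have t7 : sm E7 (∑ i, (r i).p2.imK • x i) = ∑ i, (r i).p2.imK • sm E7 (x i) := by
    rw [show sm E7 (∑ i, (r i).p2.imK • x i) = smL h E7 (∑ i, (r i).p2.imK • x i) from rfl,
      map_sum]
    simp only [map_smul, smL_apply]
  have hexp : ∑ i, ((r i).p1.re • x i + (r i).p1.imI • sm E1 (x i) + (r i).p1.imJ • sm E2 (x i)
      + (r i).p1.imK • sm E3 (x i) + (r i).p2.re • sm E4 (x i) + (r i).p2.imI • sm E5 (x i)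
      + (r i).p2.imJ • sm E6 (x i) + (r i).p2.imK • sm E7 (x i)) = 0 := by
    rw [← hsum]
    exact Finset.sum_congr rfl (fun i _ => (sm_expand h (r i) (x i)).symm)
  have e0 : (∑ i, (r i).p1.re • x i) + sm E1 (∑ i, (r i).p1.imI • x i)
      + sm E2 (∑ i, (r i).p1.imJ • x i) + sm E3 (∑ i, (r i).p1.imK • x i)
      + sm E4 (∑ i, (r i).p2.re • x i) + sm E5 (∑ i, (r i).p2.imI • x i)
      + sm E6 (∑ i, (r i).p2.imJ • x i) + sm E7 (∑ i, (r i).p2.imK • x i) = 0 := by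
    rw [t1, t2, t3, t4, t5, t6, t7, ← Finset.sum_add_distrib, ← Finset.sum_add_distrib,
      ← Finset.sum_add_distrib, ← Finset.sum_add_distrib, ← Finset.sum_add_distrib,
      ← Finset.sum_add_distrib, ← Finset.sum_add_distrib]
    exact hexp
  obtain ⟨z0, z1, z2, z3, z4, z5, z6, z7⟩ := key h _ _ _ _ _ _ _ _
    (assoc_sum h _ x hx) (assoc_sum h _ x hx) (assoc_sum h _ x hx) (assoc_sum h _ x hx)
    (assoc_sum h _ x hx) (assoc_sum h _ x hx) (assoc_sum h _ x hx) (assoc_sum h _ x hx) e0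
  have f0 : ∀ i, (r i).p1.re = 0 := Fintype.linearIndependent_iff.mp hli _ z0
  have f1 : ∀ i, (r i).p1.imI = 0 := Fintype.linearIndependent_iff.mp hli _ z1
  have f2 : ∀ i, (r i).p1.imJ = 0 := Fintype.linearIndependent_iff.mp hli _ z2
  have f3 : ∀ i, (r i).p1.imK = 0 := Fintype.linearIndependent_iff.mp hli _ z3
  have f4 : ∀ i, (r i).p2.re = 0 := Fintype.linearIndependent_iff.mp hli _ z4
  have f5 : ∀ i, (r i).p2.imI = 0 := Fintype.linearIndependent_iff.mp hli _ z5
  have f6 : ∀ i, (r i).p2.imJ = 0 := Fintype.linearIndependent_iff.mp hli _ z6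
  have f7 : ∀ i, (r i).p2.imK = 0 := Fintype.linearIndependent_iff.mp hli _ z7
  intro i
  have hd := odecomp (r i)
  rw [f0 i, f1 i, f2 i, f3 i, f4 i, f5 i, f6 i, f7 i] at hd
  simpa using hd

end
end StmtNine

/-- If `x₁,…,xₙ ∈ 𝒜(M)` are ℝ-linearly independent and `Σ rᵢxᵢ = 0` with
`rᵢ ∈ 𝕆`, then all `rᵢ = 0`. Consequently a subset `S ⊆ 𝒜(M)` is 𝕆-linearly independent
iff it is ℝ-linearly independent. -/
theorem stmt9 {M : Type*} [AddCommGroup M] [Module ℝ M]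
    (sm : Octo → M → M) (h : IsOMod sm) :
    (∀ (n : ℕ) (x : Fin n → M) (r : Fin n → Octo),
      (∀ i, x i ∈ assocSet sm) → LinearIndependent ℝ x →
      (∑ i, sm (r i) (x i)) = 0 → ∀ i, r i = 0) ∧
    (∀ S : Set M, S ⊆ assocSet sm →
      (OLinIndep sm S ↔ LinearIndependent ℝ ((↑) : S → M))) := by
  constructor
  · exact fun n x r hx hli hsum => StmtNine.partA h n x r hx hli hsum
  · intro S hS
    constructor
    · intro hO
      rw [linearIndependent_iff']
      intro t g hg i hi
      classical
      have hsm : ∀ (a : ℝ) (x : M), sm (Octo.ofReal a) x = a • x := by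
        intro a x
        rw [Octo.ofReal, h.real_smul, h.one_smul]
      set e : Fin t.card ≃ {x // x ∈ t} := t.equivFin.symm with he
      have hres := hO t.card (fun k => (((e k : S) : M))) (fun k => Octo.ofReal (g (e k)))
        (fun a b hab => e.injective (Subtype.ext (Subtype.ext hab)))
        (fun k => (e k : S).2)
        (by
          simp only [hsm]
          exact ((Fintype.sum_equiv e (fun k => g (e k) • ((e k : S) : M))
            (fun a => g a • ((a : S) : M)) (fun k => rfl)).trans
            (Finset.sum_coe_sort t (fun i : S => g i • (i : M)))).trans hg)
      have hz := hres (e.symm ⟨i, hi⟩)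
      simp only [Equiv.apply_symm_apply] at hz
      exact StmtNine.ofReal_eq_zero hz
    · intro hli n s r hinj hmem hsum i
      have hxa : ∀ k, s k ∈ assocSet sm := fun k => hS (hmem k)
      have hs' : LinearIndependent ℝ s :=
        hli.comp (fun k : Fin n => (⟨s k, hmem k⟩ : S))
          (fun a b hab => hinj (congrArg Subtype.val hab))
      exact StmtNine.partA h n s r hxa hs' hsum i
end
end
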